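/- arXiv:1011.5870 — 9 statements merged into one kernel-verified Lean document; each statement's English description precedes it below -/
import Mathlib

section
/- Let A be an m×n (0,1)-matrix and let t be a positive integer. Then ρ_t(A) = min{ te + f : there exists a set of e rows and f columns of A that together cover all the 1s of A }. -/
open scoped BigOperators

/-- The `t`-term rank of a matrix `A` with entries in `ℕ`: the largest number of 1s of `A`
(equivalently, the largest sum `σ(B)` over `(0,1)`-matrices `B ≤ A`) with at most one 1 in
each column and at most `t` 1s in each row. -/
noncomputable def tTermRank {α β : Type*} [Fintype α] [Fintype β] (t : ℕ)
    (A : Matrix α β ℕ) : ℕ :=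
  sSup {k : ℕ | ∃ B : Matrix α β ℕ,
    (∀ i j, B i j ≤ A i j) ∧ (∀ i, ∑ j, B i j ≤ t) ∧ (∀ j, ∑ i, B i j ≤ 1) ∧
    k = ∑ i, ∑ j, B i j}

open Finset in
theorem tTerm_aux (m n t : ℕ) (ht : 0 < t)
    (A : Matrix (Fin m) (Fin n) ℕ) (hA : ∀ i j, A i j ≤ 1) :
    ∃ (B : Matrix (Fin m) (Fin n) ℕ) (E : Finset (Fin m)) (F : Finset (Fin n)),
      (∀ i j, B i j ≤ A i j) ∧ (∀ i, ∑ j, B i j ≤ t) ∧ (∀ j, ∑ i, B i j ≤ 1) ∧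
      (∀ i j, A i j = 1 → i ∈ E ∨ j ∈ F) ∧
      t * E.card + F.card ≤ ∑ i, ∑ j, B i j := by
  classical
  set N : Finset (Fin m) → Finset (Fin n) :=
    fun R => univ.filter fun j => ∃ i ∈ R, A i j = 1 with hN
  set d : ℕ := (univ : Finset (Finset (Fin m))).sup (fun R => t * R.card - (N R).card) with hd
  have hdle : ∀ R : Finset (Fin m), t * R.card ≤ (N R).card + d := by
    intro R
    have h2 : t * R.card - (N R).card ≤ d :=
      Finset.le_sup (f := fun R => t * R.card - (N R).card) (Finset.mem_univ R)
    omega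
  set T : Fin m × Fin t → Finset (Fin n ⊕ Fin d) :=
    fun x => ((N {x.1}).image Sum.inl) ∪ ((univ : Finset (Fin d)).image Sum.inr) with hT
  have hall : ∀ s : Finset (Fin m × Fin t), s.card ≤ (s.biUnion T).card := by
    intro s
    rcases s.eq_empty_or_nonempty with rfl | ⟨x0, hx0⟩
    · simp
    set R := s.image Prod.fst with hR
    have h1 : s.card ≤ t * R.card := by
      calc s.card ≤ (R ×ˢ (univ : Finset (Fin t))).card := by
            apply Finset.card_le_card
            intro x hx
            exact Finset.mem_product.mpr ⟨Finset.mem_image_of_mem _ hx, Finset.mem_univ _⟩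
        _ = t * R.card := by simp [Finset.card_product, Nat.mul_comm]
    have hsub : ((N R).image Sum.inl) ∪ ((univ : Finset (Fin d)).image Sum.inr) ⊆ s.biUnion T := by
      intro y hy
      rcases Finset.mem_union.mp hy with hy | hy
      · obtain ⟨j, hj, rfl⟩ := Finset.mem_image.mp hy
        obtain ⟨i, hiR, hij⟩ := (Finset.mem_filter.mp hj).2
        obtain ⟨x, hxs, rfl⟩ := Finset.mem_image.mp hiR
        refine Finset.mem_biUnion.mpr ⟨x, hxs, Finset.mem_union_left _ ?_⟩
        exact Finset.mem_image_of_mem _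
          (Finset.mem_filter.mpr ⟨Finset.mem_univ _, x.1, Finset.mem_singleton_self _, hij⟩)
      · exact Finset.mem_biUnion.mpr ⟨x0, hx0, Finset.mem_union_right _ hy⟩
    have hdisj : Disjoint ((N R).image Sum.inl) ((univ : Finset (Fin d)).image Sum.inr) := by
      simp [Finset.disjoint_left]
    have hcard : (N R).card + d ≤ (s.biUnion T).card := by
      calc (N R).card + d
          = (((N R).image Sum.inl) ∪ ((univ : Finset (Fin d)).image Sum.inr)).card := by
            rw [Finset.card_union_of_disjoint hdisj,
              Finset.card_image_of_injective _ Sum.inl_injective,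
              Finset.card_image_of_injective _ Sum.inr_injective, Finset.card_univ,
              Fintype.card_fin]
        _ ≤ _ := Finset.card_le_card hsub
    have := hdle R
    omega
  obtain ⟨f, hfinj, hfmem⟩ :=
    (Finset.all_card_le_biUnion_card_iff_exists_injective T).mp hall
  set B : Matrix (Fin m) (Fin n) ℕ :=
    fun i j => if ∃ k : Fin t, f (i, k) = Sum.inl j then 1 else 0 with hB
  have hNmem : ∀ i j, (∃ k : Fin t, f (i, k) = Sum.inl j) → A i j = 1 := by
    rintro i j ⟨k, hk⟩
    have hm := hfmem (i, k)
    rw [hk] at hm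
    rcases Finset.mem_union.mp hm with h' | h'
    · obtain ⟨j', hj', hjj⟩ := Finset.mem_image.mp h'
      obtain rfl : j' = j := Sum.inl_injective hjj
      obtain ⟨i', hi', hA1⟩ := (Finset.mem_filter.mp hj').2
      rw [Finset.mem_singleton] at hi'
      rw [hi'] at hA1
      exact hA1
    · obtain ⟨r, -, hr⟩ := Finset.mem_image.mp h'
      simp at hr
  have hBA : ∀ i j, B i j ≤ A i j := by
    intro i j
    by_cases h : ∃ k : Fin t, f (i, k) = Sum.inl j
    · have := hNmem i j h
      simp [hB, h, this]
    · simp [hB, h]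
  have hrowcard : ∀ i, ∑ j, B i j
      = (univ.filter fun j => ∃ k : Fin t, f (i, k) = Sum.inl j).card := by
    intro i
    rw [Finset.card_filter]
  have hrow : ∀ i, ∑ j, B i j ≤ t := by
    intro i
    rw [hrowcard i]
    haveI : Nonempty (Fin t) := ⟨⟨0, ht⟩⟩
    have hle : (univ.filter fun j => ∃ k : Fin t, f (i, k) = Sum.inl j).card
        ≤ (univ : Finset (Fin t)).card := by
      apply Finset.card_le_card_of_injOn
        (fun j => if h : ∃ k : Fin t, f (i, k) = Sum.inl j then h.choose else Classical.arbitrary _)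
      · intro j _; exact Finset.mem_univ _
      · intro j hj j' hj' hjj
        simp only [Finset.mem_coe, Finset.mem_filter] at hj hj'
        dsimp only at hjj
        rw [dif_pos hj.2, dif_pos hj'.2] at hjj
        have e1 := hj.2.choose_spec
        have e2 := hj'.2.choose_spec
        rw [hjj] at e1
        rw [e2] at e1
        exact Sum.inl_injective e1.symm
    simpa using hle
  have hcol : ∀ j, ∑ i, B i j ≤ 1 := by
    intro j
    have hsum : ∑ i, B i j
        = (univ.filter fun i => ∃ k : Fin t, f (i, k) = Sum.inl j).card := by
      rw [Finset.card_filter]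
    rw [hsum]
    apply Finset.card_le_one.mpr
    intro i hi i' hi'
    obtain ⟨k, hk⟩ := (Finset.mem_filter.mp hi).2
    obtain ⟨k', hk'⟩ := (Finset.mem_filter.mp hi').2
    have := hfinj (hk.trans hk'.symm)
    exact congrArg Prod.fst this
  -- total count
  have htot : t * m ≤ (∑ i, ∑ j, B i j) + d := by
    have hsplit : ((univ : Finset (Fin m × Fin t)).filter fun x => ∃ j, f x = Sum.inl j).card
        + ((univ : Finset (Fin m × Fin t)).filter fun x => ¬ ∃ j, f x = Sum.inl j).card
        = t * m := by
      rw [Finset.card_filter_add_card_filter_not]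
      simp [Nat.mul_comm]
    have hXc : ((univ : Finset (Fin m × Fin t)).filter fun x => ¬ ∃ j, f x = Sum.inl j).card
        ≤ d := by
      rcases Finset.eq_empty_or_nonempty
          ((univ : Finset (Fin m × Fin t)).filter fun x => ¬ ∃ j, f x = Sum.inl j) with he | hne
      · rw [he]; simp
      · obtain ⟨x0, hx0⟩ := hne
        have hx0' : ∃ r, f x0 = Sum.inr r := by
          have := (Finset.mem_filter.mp hx0).2
          cases hfx : f x0 with
          | inl j => exact absurd ⟨j, hfx⟩ this
          | inr r => exact ⟨r, rfl⟩
        haveI : Nonempty (Fin d) := ⟨hx0'.choose⟩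
        have hle : ((univ : Finset (Fin m × Fin t)).filter fun x => ¬ ∃ j, f x = Sum.inl j).card
            ≤ (univ : Finset (Fin d)).card := by
          apply Finset.card_le_card_of_injOn
            (fun x => if h : ∃ r, f x = Sum.inr r then h.choose else Classical.arbitrary _)
          · intro x _; exact Finset.mem_univ _
          · intro x hx x' hx' hxx
            simp only [Finset.mem_coe, Finset.mem_filter] at hx hx'
            have hxr : ∃ r, f x = Sum.inr r := by
              cases hfx : f x with
              | inl j => exact absurd ⟨j, hfx⟩ hx.2
              | inr r => exact ⟨r, rfl⟩
            have hx'r : ∃ r, f x' = Sum.inr r := by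
              cases hfx : f x' with
              | inl j => exact absurd ⟨j, hfx⟩ hx'.2
              | inr r => exact ⟨r, rfl⟩
            dsimp only at hxx
            rw [dif_pos hxr, dif_pos hx'r] at hxx
            have e1 := hxr.choose_spec
            have e2 := hx'r.choose_spec
            apply hfinj
            rw [e1, e2, hxx]
        simpa using hle
    have hsum2 : ∑ i, ∑ j, B i j
        = ((univ : Finset (Fin m × Fin n)).filter
            fun p => ∃ k : Fin t, f (p.1, k) = Sum.inl p.2).card := by
      rw [Finset.card_filter, Fintype.sum_prod_type]
    have hX : ((univ : Finset (Fin m × Fin t)).filter fun x => ∃ j, f x = Sum.inl j).card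
        ≤ ∑ i, ∑ j, B i j := by
      rw [hsum2]
      rcases Finset.eq_empty_or_nonempty
          ((univ : Finset (Fin m × Fin t)).filter fun x => ∃ j, f x = Sum.inl j) with he | hne
      · rw [he]; simp
      · obtain ⟨x0, hx0⟩ := hne
        haveI : Nonempty (Fin n) := ⟨(Finset.mem_filter.mp hx0).2.choose⟩
        apply Finset.card_le_card_of_injOn
          (fun x => (x.1, if h : ∃ j, f x = Sum.inl j then h.choose else Classical.arbitrary _))
        · intro x hx
          have hx2 := (Finset.mem_filter.mp hx).2
          show (x.1, _) ∈ _
          rw [dif_pos hx2]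
          refine Finset.mem_filter.mpr ⟨Finset.mem_univ _, ⟨x.2, ?_⟩⟩
          exact hx2.choose_spec
        · intro x hx x' hx' hxx
          simp only [Finset.mem_coe, Finset.mem_filter] at hx hx'
          dsimp only at hxx
          rw [dif_pos hx.2, dif_pos hx'.2] at hxx
          have h2 : hx.2.choose = hx'.2.choose := congrArg Prod.snd hxx
          have e1 := hx.2.choose_spec
          have e2 := hx'.2.choose_spec
          apply hfinj
          rw [e1, e2, h2]
    omega
  by_cases hd0 : d = 0
  · refine ⟨B, univ, ∅, hBA, hrow, hcol, fun i j _ => Or.inl (Finset.mem_univ i), ?_⟩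
    rw [hd0] at htot
    simpa [Finset.card_univ] using htot
  · obtain ⟨R, -, hRs⟩ := Finset.exists_mem_eq_sup (univ : Finset (Finset (Fin m)))
      ⟨∅, Finset.mem_univ _⟩ (fun R => t * R.card - (N R).card)
    refine ⟨B, Rᶜ, N R, hBA, hrow, hcol, ?_, ?_⟩
    · intro i j hij
      by_cases hiR : i ∈ R
      · exact Or.inr (Finset.mem_filter.mpr ⟨Finset.mem_univ _, i, hiR, hij⟩)
      · exact Or.inl (Finset.mem_compl.mpr hiR)
    · have hc : Rᶜ.card = m - R.card := by
        rw [Finset.card_compl]; simp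
      have hRm : R.card ≤ m := by
        simpa using Finset.card_le_card (Finset.subset_univ R)
      rw [hc]
      have hkey : t * (m - R.card) + t * R.card = t * m := by
        rw [← Nat.mul_add, Nat.sub_add_cancel hRm]
      have hdR : d = t * R.card - (N R).card := by rw [hd]; exact hRs
      omega

open Finset in
theorem tTerm_easy (m n t : ℕ) (A : Matrix (Fin m) (Fin n) ℕ)
    (B : Matrix (Fin m) (Fin n) ℕ) (hBA : ∀ i j, B i j ≤ A i j)
    (hrow : ∀ i, ∑ j, B i j ≤ t) (hcol : ∀ j, ∑ i, B i j ≤ 1)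
    (E : Finset (Fin m)) (F : Finset (Fin n)) (hcov : ∀ i j, A i j = 1 → i ∈ E ∨ j ∈ F)
    (hA : ∀ i j, A i j ≤ 1) :
    ∑ i, ∑ j, B i j ≤ t * E.card + F.card := by
  classical
  have hsplit : ∑ i, ∑ j, B i j = (∑ i ∈ E, ∑ j, B i j) + ∑ i ∈ Eᶜ, ∑ j, B i j :=
    (Finset.sum_add_sum_compl E _).symm
  have h1 : ∑ i ∈ E, ∑ j, B i j ≤ t * E.card := by
    calc ∑ i ∈ E, ∑ j, B i j ≤ ∑ _i ∈ E, t := Finset.sum_le_sum fun i _ => hrow i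
      _ = t * E.card := by rw [Finset.sum_const, smul_eq_mul, Nat.mul_comm]
  have h2 : ∑ i ∈ Eᶜ, ∑ j, B i j ≤ F.card := by
    have hzero : ∀ i ∈ Eᶜ, ∀ j, j ∉ F → B i j = 0 := by
      intro i hi j hj
      have hAij : A i j = 0 := by
        rcases Nat.lt_or_ge (A i j) 1 with h | h
        · omega
        · have : A i j = 1 := le_antisymm (hA i j) h
          rcases hcov i j this with hE | hF
          · exact absurd hE (Finset.mem_compl.mp hi)
          · exact absurd hF hj
      have := hBA i j
      omega
    have hrew : ∀ i ∈ Eᶜ, ∑ j, B i j = ∑ j ∈ F, B i j := by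
      intro i hi
      exact (Finset.sum_subset (Finset.subset_univ F)
        (fun j _ hj => hzero i hi j hj)).symm
    calc ∑ i ∈ Eᶜ, ∑ j, B i j = ∑ i ∈ Eᶜ, ∑ j ∈ F, B i j := Finset.sum_congr rfl hrew
      _ = ∑ j ∈ F, ∑ i ∈ Eᶜ, B i j := Finset.sum_comm
      _ ≤ ∑ j ∈ F, ∑ i, B i j := Finset.sum_le_sum fun j _ =>
          Finset.sum_le_sum_of_subset (Finset.subset_univ Eᶜ)
      _ ≤ ∑ _j ∈ F, 1 := Finset.sum_le_sum fun j _ => hcol j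
      _ = F.card := by simp
  omega

/-- König–Egerváry type theorem for the `t`-term rank: `ρ_t(A)` equals the minimum of
`t·e + f` over all covers of the 1s of `A` by `e` rows and `f` columns. -/
theorem t_term_rank_eq_min_cover (m n t : ℕ) (ht : 0 < t)
    (A : Matrix (Fin m) (Fin n) ℕ) (hA : ∀ i j, A i j ≤ 1) :
    tTermRank t A = sInf {v : ℕ | ∃ (E : Finset (Fin m)) (F : Finset (Fin n)),
      (∀ i j, A i j = 1 → i ∈ E ∨ j ∈ F) ∧ v = t * E.card + F.card} := by
  classical
  obtain ⟨B, E, F, hBA, hrow, hcol, hcov, hle⟩ := tTerm_aux m n t ht A hA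
  unfold tTermRank
  set S1 : Set ℕ := {k : ℕ | ∃ B : Matrix (Fin m) (Fin n) ℕ,
    (∀ i j, B i j ≤ A i j) ∧ (∀ i, ∑ j, B i j ≤ t) ∧ (∀ j, ∑ i, B i j ≤ 1) ∧
    k = ∑ i, ∑ j, B i j} with hS1
  set S2 : Set ℕ := {v : ℕ | ∃ (E : Finset (Fin m)) (F : Finset (Fin n)),
    (∀ i j, A i j = 1 → i ∈ E ∨ j ∈ F) ∧ v = t * E.card + F.card} with hS2
  have h1ne : S1.Nonempty := ⟨0, (fun _ _ => 0), fun i j => Nat.zero_le _,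
    by simp, by simp, by simp⟩
  have h2ne : S2.Nonempty := ⟨t * (Finset.univ : Finset (Fin m)).card + (∅ : Finset (Fin n)).card,
    Finset.univ, ∅, fun i j _ => Or.inl (Finset.mem_univ i), rfl⟩
  have h1bdd : BddAbove S1 := by
    refine ⟨m * t, fun k hk => ?_⟩
    obtain ⟨B', _, hr', _, rfl⟩ := hk
    calc ∑ i, ∑ j, B' i j ≤ ∑ _i : Fin m, t := Finset.sum_le_sum fun i _ => hr' i
      _ = m * t := by simp [Finset.sum_const, Finset.card_univ, Nat.mul_comm]
  have h1mem : (∑ i, ∑ j, B i j) ∈ S1 := ⟨B, hBA, hrow, hcol, rfl⟩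
  have h2mem : (t * E.card + F.card) ∈ S2 := ⟨E, F, hcov, rfl⟩
  apply le_antisymm
  · apply csSup_le h1ne
    intro k hk
    apply le_csInf h2ne
    intro v hv
    obtain ⟨B', hB'A, hr', hc', rfl⟩ := hk
    obtain ⟨E', F', hcov', rfl⟩ := hv
    exact tTerm_easy m n t A B' hB'A hr' hc' E' F' hcov' hA
  · calc sInf S2 ≤ t * E.card + F.card := csInf_le (OrderBot.bddBelow _) h2mem
      _ ≤ ∑ i, ∑ j, B i j := hle
      _ ≤ sSup S1 := le_csSup h1bdd h1mem
end

section
/- Let A be an m×n (0,1)-matrix, regarded as the incidence matrix of a family C = (C_1, C_2, …, C_m) of subsets of an n-element set X = {x_1, …, x_n} (so x_j ∈ C_i if and only if the (i,j)-entry of A is 1), and let t be a positive integer. Then ρ_t(A) = min over all subsets K of {1,2,…,m} of ( |∪_{i∈K} C_i| + t(m − |K|) ). -/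
open scoped BigOperators

/-- Hall-type formula for the `t`-term rank of the incidence matrix `A` of a family
`C = (C_1, …, C_m)` of subsets of an `n`-element set:
`ρ_t(A) = min over K ⊆ {1,…,m} of (|∪_{i∈K} C_i| + t(m − |K|))`. -/
theorem t_term_rank_eq_min_union (m n t : ℕ) (ht : 0 < t)
    (C : Fin m → Finset (Fin n)) (A : Matrix (Fin m) (Fin n) ℕ)
    (hA : ∀ i j, A i j = if j ∈ C i then 1 else 0) :
    tTermRank t A =
      sInf {v : ℕ | ∃ K : Finset (Fin m), v = (K.biUnion C).card + t * (m - K.card)} := by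
  classical
  set V := {v : ℕ | ∃ K : Finset (Fin m), v = (K.biUnion C).card + t * (m - K.card)} with hV
  set S := {k : ℕ | ∃ B : Matrix (Fin m) (Fin n) ℕ,
    (∀ i j, B i j ≤ A i j) ∧ (∀ i, ∑ j, B i j ≤ t) ∧ (∀ j, ∑ i, B i j ≤ 1) ∧
    k = ∑ i, ∑ j, B i j} with hSdef
  have htR : tTermRank t A = sSup S := rfl
  have hVne : V.Nonempty := ⟨((∅ : Finset (Fin m)).biUnion C).card + t * (m - (∅ : Finset (Fin m)).card), ⟨∅, rfl⟩⟩
  have hSne : (0 : ℕ) ∈ S := by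
    refine ⟨0, fun i j => Nat.zero_le _, by simp, by simp, by simp⟩
  -- key upper bound: every element of S is at most every element of V
  have key : ∀ k ∈ S, ∀ v ∈ V, k ≤ v := by
    rintro k ⟨B, hBA, hrow, hcol, rfl⟩ v ⟨K, rfl⟩
    have h1 : ∑ i ∈ K, (∑ j, B i j) + ∑ i ∈ Kᶜ, (∑ j, B i j) = ∑ i, ∑ j, B i j :=
      Finset.sum_add_sum_compl K _
    have h2 : ∑ i ∈ Kᶜ, (∑ j, B i j) ≤ Kᶜ.card * t := by
      calc ∑ i ∈ Kᶜ, (∑ j, B i j) ≤ ∑ _i ∈ Kᶜ, t := Finset.sum_le_sum fun i _ => hrow i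
        _ = Kᶜ.card * t := by rw [Finset.sum_const, smul_eq_mul]
    have hKc : Kᶜ.card = m - K.card := by
      rw [Finset.card_compl, Fintype.card_fin]
    have h3 : ∑ i ∈ K, (∑ j, B i j) ≤ (K.biUnion C).card := by
      rw [show ∑ i ∈ K, (∑ j, B i j) = ∑ j, ∑ i ∈ K, B i j from Finset.sum_comm]
      have hzero : ∀ j ∈ (Finset.univ : Finset (Fin n)), j ∉ K.biUnion C →
          ∑ i ∈ K, B i j = 0 := by
        intro j _ hj
        refine Finset.sum_eq_zero fun i hi => ?_
        have hji : j ∉ C i := fun h => hj (Finset.mem_biUnion.2 ⟨i, hi, h⟩)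
        have hB := hBA i j
        rw [hA i j, if_neg hji] at hB
        omega
      rw [← Finset.sum_subset (Finset.subset_univ (K.biUnion C)) hzero]
      calc ∑ j ∈ K.biUnion C, ∑ i ∈ K, B i j ≤ ∑ _j ∈ K.biUnion C, 1 := by
            refine Finset.sum_le_sum fun j _ => ?_
            exact le_trans (Finset.sum_le_sum_of_subset (Finset.subset_univ K)) (hcol j)
        _ = (K.biUnion C).card := by simp
    rw [hKc] at h2
    have hmc : (m - K.card) * t = t * (m - K.card) := Nat.mul_comm _ _
    omega
  have hbdd : BddAbove S := by
    obtain ⟨v₀, hv₀⟩ := hVne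
    exact ⟨v₀, fun k hk => key k hk v₀ hv₀⟩
  have hle : sSup S ≤ sInf V := csSup_le ⟨0, hSne⟩ fun k hk => key k hk _ (Nat.sInf_mem hVne)
  -- lower bound via Hall's theorem
  have hvtm : sInf V ≤ t * m := by
    have : t * m ∈ V := ⟨∅, by simp⟩
    exact Nat.sInf_le this
  set d := t * m - sInf V with hd
  set N : Fin m × Fin t → Finset (Fin n ⊕ Fin d) :=
    fun p => (C p.1).image Sum.inl ∪ Finset.univ.image Sum.inr with hN
  have hall : ∀ s : Finset (Fin m × Fin t), s.card ≤ (s.biUnion N).card := by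
    intro s
    rcases s.eq_empty_or_nonempty with rfl | hs
    · simp
    · set K := s.image Prod.fst with hK
      have hsub : s ⊆ K ×ˢ Finset.univ := fun p hp =>
        Finset.mem_product.2 ⟨Finset.mem_image_of_mem _ hp, Finset.mem_univ _⟩
      have hcard1 : s.card ≤ K.card * t := by
        calc s.card ≤ (K ×ˢ (Finset.univ : Finset (Fin t))).card := Finset.card_le_card hsub
          _ = K.card * t := by rw [Finset.card_product, Finset.card_univ, Fintype.card_fin]
      have hsub2 : ((K.biUnion C).image Sum.inl ∪
          (Finset.univ : Finset (Fin d)).image Sum.inr) ⊆ s.biUnion N := by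
        intro x hx
        rcases Finset.mem_union.1 hx with hx | hx
        · obtain ⟨j, hj, rfl⟩ := Finset.mem_image.1 hx
          obtain ⟨i, hi, hji⟩ := Finset.mem_biUnion.1 hj
          obtain ⟨p, hp, rfl⟩ := Finset.mem_image.1 hi
          exact Finset.mem_biUnion.2 ⟨p, hp,
            Finset.mem_union_left _ (Finset.mem_image_of_mem _ hji)⟩
        · obtain ⟨e, _, rfl⟩ := Finset.mem_image.1 hx
          obtain ⟨p, hp⟩ := hs
          exact Finset.mem_biUnion.2 ⟨p, hp,
            Finset.mem_union_right _ (Finset.mem_image_of_mem _ (Finset.mem_univ e))⟩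
      have hdisj : Disjoint ((K.biUnion C).image Sum.inl)
          ((Finset.univ : Finset (Fin d)).image Sum.inr) := by
        simp [Finset.disjoint_left]
      have hcard2 : (K.biUnion C).card + d ≤ (s.biUnion N).card := by
        calc (K.biUnion C).card + d
            = ((K.biUnion C).image Sum.inl ∪
              (Finset.univ : Finset (Fin d)).image Sum.inr).card := by
              rw [Finset.card_union_of_disjoint hdisj,
                Finset.card_image_of_injective _ Sum.inl_injective,
                Finset.card_image_of_injective _ Sum.inr_injective,
                Finset.card_univ, Fintype.card_fin]
          _ ≤ (s.biUnion N).card := Finset.card_le_card hsub2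
      have hVK : sInf V ≤ (K.biUnion C).card + t * (m - K.card) := Nat.sInf_le ⟨K, rfl⟩
      have hKm : K.card ≤ m := by simpa using Finset.card_le_univ K
      have hmul : t * (m - K.card) + t * K.card = t * m := by
        rw [← Nat.mul_add, Nat.sub_add_cancel hKm]
      have hc : K.card * t = t * K.card := Nat.mul_comm _ _
      omega
  obtain ⟨f, hfinj, hfN⟩ := (Finset.all_card_le_biUnion_card_iff_exists_injective N).1 hall
  set B : Matrix (Fin m) (Fin n) ℕ :=
    fun i j => ∑ s : Fin t, if f (i, s) = Sum.inl j then 1 else 0 with hB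
  have hBle1 : ∀ i j, B i j ≤ 1 := by
    intro i j
    simp only [hB]
    rw [Finset.sum_boole]
    rw [Nat.cast_id]
    refine Finset.card_le_one.2 fun a ha b hb => ?_
    simp only [Finset.mem_filter] at ha hb
    have := hfinj (ha.2.trans hb.2.symm)
    exact (Prod.mk.injEq _ _ _ _ ▸ this).2
  have hBA : ∀ i j, B i j ≤ A i j := by
    intro i j
    rw [hA i j]
    by_cases hj : j ∈ C i
    · rw [if_pos hj]; exact hBle1 i j
    · rw [if_neg hj]
      simp only [hB]
      refine le_of_eq (Finset.sum_eq_zero fun s _ => ?_)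
      rw [if_neg]
      intro hfs
      have hmem := hfN (i, s)
      rw [hfs, hN] at hmem
      rcases Finset.mem_union.1 hmem with h | h
      · obtain ⟨j', hj', hjj⟩ := Finset.mem_image.1 h
        cases hjj
        exact hj hj'
      · obtain ⟨e, _, he⟩ := Finset.mem_image.1 h
        exact Sum.inl_ne_inr he.symm
  -- each left vertex contributes exactly 1 in total
  have hone : ∀ p : Fin m × Fin t,
      (∑ j, if f p = Sum.inl j then 1 else 0) +
      (∑ e, if f p = Sum.inr e then 1 else 0) = 1 := by
    intro p
    rcases hfp : f p with j | e
    · simp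
    · simp
  have hrow : ∀ i, ∑ j, B i j ≤ t := by
    intro i
    simp only [hB]
    rw [Finset.sum_comm]
    calc ∑ s : Fin t, ∑ j, (if f (i, s) = Sum.inl j then 1 else 0)
        ≤ ∑ _s : Fin t, 1 := by
          refine Finset.sum_le_sum fun s _ => ?_
          have := hone (i, s)
          omega
      _ = t := by simp
  have hcol : ∀ j, ∑ i, B i j ≤ 1 := by
    intro j
    simp only [hB]
    have : ∑ i, ∑ s : Fin t, (if f (i, s) = Sum.inl j then 1 else 0)
        = ∑ p : Fin m × Fin t, (if f p = Sum.inl j then 1 else 0) := by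
      rw [Fintype.sum_prod_type]
    rw [this, Finset.sum_boole, Nat.cast_id]
    refine Finset.card_le_one.2 fun a ha b hb => ?_
    simp only [Finset.mem_filter] at ha hb
    exact hfinj (ha.2.trans hb.2.symm)
  -- number of dummies used is at most d
  have hdummy : ∑ p : Fin m × Fin t, (∑ e, if f p = Sum.inr e then 1 else 0) ≤ d := by
    rw [Finset.sum_comm]
    calc ∑ e : Fin d, ∑ p : Fin m × Fin t, (if f p = Sum.inr e then 1 else 0)
        ≤ ∑ _e : Fin d, 1 := by
          refine Finset.sum_le_sum fun e _ => ?_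
          rw [Finset.sum_boole, Nat.cast_id]
          refine Finset.card_le_one.2 fun a ha b hb => ?_
          simp only [Finset.mem_filter] at ha hb
          exact hfinj (ha.2.trans hb.2.symm)
      _ = d := by simp
  have htotal : ∑ p : Fin m × Fin t, ((∑ j, if f p = Sum.inl j then 1 else 0) +
      (∑ e, if f p = Sum.inr e then 1 else 0)) = m * t := by
    rw [Finset.sum_congr rfl fun p _ => hone p]
    simp [Fintype.card_prod]
  have hsumB : ∑ i, ∑ j, B i j = ∑ p : Fin m × Fin t, (∑ j, if f p = Sum.inl j then 1 else 0) := by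
    simp only [hB]
    rw [Fintype.sum_prod_type]
    exact Finset.sum_congr rfl fun i _ => Finset.sum_comm
  have hBbig : t * m - d ≤ ∑ i, ∑ j, B i j := by
    rw [Finset.sum_add_distrib] at htotal
    have hc : m * t = t * m := Nat.mul_comm _ _
    omega
  have hmemS : (∑ i, ∑ j, B i j) ∈ S := ⟨B, hBA, hrow, hcol, rfl⟩
  have hge : sInf V ≤ sSup S := by
    have h1 : sInf V ≤ ∑ i, ∑ j, B i j := by omega
    exact le_trans h1 (le_csSup hbdd hmemS)
  rw [htR]
  exact le_antisymm hle hge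
end

section
/- Let A be an m×n (0,1)-matrix and let t ≥ 2 be an integer. Then there exist (0,1)-matrices C ≤ B ≤ A (entrywise) such that: every row sum of B is at most t and every column sum of B is at most 1 with σ(B) = ρ_t(A); and every row sum of C is at most t−1 and every column sum of C is at most 1 with σ(C) = ρ_{t−1}(A). -/
open scoped BigOperators

namespace TermRankAux

open Finset

variable {m n : ℕ}

def pCompat (A : Matrix (Fin m) (Fin n) ℕ) (p : Fin n → Option (Fin m)) : Prop :=
  ∀ j i, p j = some i → 1 ≤ A i j

def fiber (p : Fin n → Option (Fin m)) (i : Fin m) : Finset (Fin n) :=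
  Finset.univ.filter (fun j => p j = some i)

def deg (p : Fin n → Option (Fin m)) (i : Fin m) : ℕ := (fiber p i).card

def psize (p : Fin n → Option (Fin m)) : ℕ :=
  (Finset.univ.filter (fun j => (p j).isSome)).card

noncomputable def pmMat (p : Fin n → Option (Fin m)) : Matrix (Fin m) (Fin n) ℕ :=
  fun i j => if p j = some i then 1 else 0

lemma pmMat_col (p : Fin n → Option (Fin m)) (j : Fin n) :
    ∑ i, pmMat p i j = if (p j).isSome then 1 else 0 := by
  unfold pmMat
  cases hp : p j with
  | none => simp [hp]
  | some i0 => simp [hp]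

lemma pmMat_row (p : Fin n → Option (Fin m)) (i : Fin m) :
    ∑ j, pmMat p i j = deg p i := by
  unfold pmMat deg fiber
  rw [Finset.card_filter]

lemma pmMat_total (p : Fin n → Option (Fin m)) :
    ∑ i, ∑ j, pmMat p i j = psize p := by
  rw [show ∑ i, ∑ j, pmMat p i j = ∑ j, ∑ i, pmMat p i j from Finset.sum_comm]
  unfold psize
  rw [Finset.card_filter]
  exact Finset.sum_congr rfl fun j _ => pmMat_col p j

lemma psize_eq_sum_deg (p : Fin n → Option (Fin m)) :
    psize p = ∑ i, deg p i := by
  unfold psize deg fiber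
  simp only [Finset.card_filter]
  rw [Finset.sum_comm]
  refine Finset.sum_congr rfl fun j _ => ?_
  cases hp : p j with
  | none => simp [hp]
  | some i0 => simp [hp]

def VSet (t : ℕ) (A : Matrix (Fin m) (Fin n) ℕ) : Set ℕ :=
  {k | ∃ p : Fin n → Option (Fin m), pCompat A p ∧ (∀ i, deg p i ≤ t) ∧ psize p = k}

/-- from a matrix witness to a partial-assignment witness -/

lemma matrix_to_p (A B : Matrix (Fin m) (Fin n) ℕ)
    (hBA : ∀ i j, B i j ≤ A i j) (hrow : ∀ i, ∑ j, B i j ≤ (t : ℕ))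
    (hcol : ∀ j, ∑ i, B i j ≤ 1) :
    ∃ p : Fin n → Option (Fin m), pCompat A p ∧ (∀ i, deg p i ≤ t) ∧
      psize p = ∑ i, ∑ j, B i j := by
  classical
  -- uniqueness of nonzero entry in a column
  have huniq : ∀ j i i', B i j ≠ 0 → B i' j ≠ 0 → i = i' := by
    intro j i i' hi hi'
    by_contra hne
    have hpair : B i j + B i' j = ∑ x ∈ ({i, i'} : Finset (Fin m)), B x j :=
      (Finset.sum_pair (f := fun x => B x j) hne).symm
    have hle : ∑ x ∈ ({i, i'} : Finset (Fin m)), B x j ≤ ∑ x, B x j :=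
      Finset.sum_le_sum_of_subset (Finset.subset_univ _)
    have := hcol j
    omega
  set p : Fin n → Option (Fin m) := fun j =>
    if h : ∃ i, B i j ≠ 0 then some h.choose else none with hp
  have hpsome : ∀ j i, p j = some i ↔ B i j ≠ 0 := by
    intro j i
    constructor
    · intro h
      rw [hp] at h
      simp only at h
      split at h
      · rename_i hex
        have := hex.choose_spec
        rw [Option.some_inj] at h
        rwa [← h]
      · exact absurd h (by simp)
    · intro hB
      have hex : ∃ i, B i j ≠ 0 := ⟨i, hB⟩
      rw [hp]
      simp only [dif_pos hex]
      exact congrArg some (huniq j hex.choose i hex.choose_spec hB).symm ▸ rfl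
  refine ⟨p, ?_, ?_, ?_⟩
  · intro j i h
    have hB := (hpsome j i).1 h
    have : 1 ≤ B i j := Nat.one_le_iff_ne_zero.2 hB
    exact le_trans this (hBA i j)
  · intro i
    have hdeg : deg p i ≤ ∑ j, B i j := by
      unfold deg fiber
      calc (Finset.univ.filter (fun j => p j = some i)).card
          = ∑ j ∈ Finset.univ.filter (fun j => p j = some i), 1 := by
            simp
        _ ≤ ∑ j ∈ Finset.univ.filter (fun j => p j = some i), B i j := by
            refine Finset.sum_le_sum fun j hj => ?_
            rw [Finset.mem_filter] at hj
            exact Nat.one_le_iff_ne_zero.2 ((hpsome j i).1 hj.2)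
        _ ≤ ∑ j, B i j := Finset.sum_le_sum_of_subset (Finset.filter_subset _ _)
    exact le_trans hdeg (hrow i)
  · rw [show ∑ i, ∑ j, B i j = ∑ j, ∑ i, B i j from Finset.sum_comm]
    unfold psize
    rw [Finset.card_filter]
    refine Finset.sum_congr rfl fun j _ => ?_
    by_cases hs : (p j).isSome
    · rw [if_pos hs]
      obtain ⟨i, hi⟩ := Option.isSome_iff_exists.1 hs
      have hBi : B i j ≠ 0 := (hpsome j i).1 hi
      have h1 : 1 ≤ B i j := Nat.one_le_iff_ne_zero.2 hBi
      have hle1 : ∑ x, B x j ≤ 1 := hcol j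
      have : B i j ≤ ∑ x, B x j := Finset.single_le_sum (f := fun x => B x j) (fun _ _ => Nat.zero_le _) (Finset.mem_univ i)
      omega
    · rw [if_neg hs]
      symm
      refine Finset.sum_eq_zero fun i _ => ?_
      by_contra hB
      have : p j = some i := (hpsome j i).2 hB
      rw [this] at hs
      simp at hs

lemma tTermRank_eq (t : ℕ) (A : Matrix (Fin m) (Fin n) ℕ) :
    tTermRank t A = sSup (VSet t A) := by
  unfold tTermRank
  congr 1
  ext k
  constructor
  · rintro ⟨B, hBA, hrow, hcol, rfl⟩
    obtain ⟨p, h1, h2, h3⟩ := matrix_to_p A B hBA hrow hcol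
    exact ⟨p, h1, h2, h3⟩
  · rintro ⟨p, h1, h2, rfl⟩
    refine ⟨pmMat p, ?_, ?_, ?_, (pmMat_total p).symm⟩
    · intro i j
      unfold pmMat
      split
      · rename_i h; exact h1 j i h
      · exact Nat.zero_le _
    · intro i; rw [pmMat_row]; exact h2 i
    · intro j; rw [pmMat_col]; split <;> omega

lemma psize_le (p : Fin n → Option (Fin m)) : psize p ≤ n := by
  unfold psize
  calc (Finset.univ.filter (fun j => (p j).isSome)).card ≤ Finset.univ.card :=
        Finset.card_le_card (Finset.filter_subset _ _)
    _ = n := by simp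

lemma VSet_nonempty (t : ℕ) (A : Matrix (Fin m) (Fin n) ℕ) : (VSet t A).Nonempty := by
  refine ⟨0, fun _ => none, ?_, ?_, ?_⟩
  · intro j i h; simp at h
  · intro i; unfold deg fiber; simp
  · unfold psize; simp

lemma VSet_bdd (t : ℕ) (A : Matrix (Fin m) (Fin n) ℕ) : BddAbove (VSet t A) := by
  refine ⟨n, ?_⟩
  rintro k ⟨p, _, _, rfl⟩
  exact psize_le p

lemma exists_realizer (t : ℕ) (A : Matrix (Fin m) (Fin n) ℕ) :
    ∃ p : Fin n → Option (Fin m), pCompat A p ∧ (∀ i, deg p i ≤ t) ∧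
      psize p = sSup (VSet t A) := by
  have := Nat.sSup_mem (VSet_nonempty t A) (VSet_bdd t A)
  obtain ⟨p, h1, h2, h3⟩ := this
  exact ⟨p, h1, h2, h3⟩

lemma psize_le_sSup {t : ℕ} {A : Matrix (Fin m) (Fin n) ℕ}
    (p : Fin n → Option (Fin m)) (h1 : pCompat A p) (h2 : ∀ i, deg p i ≤ t) :
    psize p ≤ sSup (VSet t A) :=
  le_csSup (VSet_bdd t A) ⟨p, h1, h2, rfl⟩

lemma mem_fiber {p : Fin n → Option (Fin m)} {i : Fin m} {j : Fin n} :
    j ∈ fiber p i ↔ p j = some i := by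
  unfold fiber; simp

lemma aug (t : ℕ) (A : Matrix (Fin m) (Fin n) ℕ) (fstar : Fin n → Option (Fin m))
    (hsc : pCompat A fstar) (hsd : ∀ i, deg fstar i ≤ t) :
    ∀ (d : ℕ) (f : Fin n → Option (Fin m)),
      (Finset.univ.filter (fun j => (fstar j).isSome ∧ f j ≠ fstar j)).card = d →
      pCompat A f → (∀ i, deg f i ≤ t) → psize f < psize fstar →
      ∃ f' i0, pCompat A f' ∧ (∀ i, deg f' i ≤ t) ∧ psize f' = psize f + 1 ∧
        deg f' i0 = deg f i0 + 1 ∧ (∀ i, i ≠ i0 → deg f' i = deg f i) := by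
  classical
  intro d
  induction d using Nat.strong_induction_on with
  | _ d IH =>
    intro f hd hc hdegle hlt
    -- step 1 : find a column matched in fstar but not in f
    have hex : ∃ j0, (fstar j0).isSome ∧ f j0 = none := by
      by_contra hcon
      push_neg at hcon
      have hsub : (Finset.univ.filter (fun j => (fstar j).isSome)) ⊆
          (Finset.univ.filter (fun j => (f j).isSome)) := by
        intro j hj
        rw [Finset.mem_filter] at hj ⊢
        refine ⟨Finset.mem_univ _, ?_⟩
        have := hcon j hj.2
        cases hfj : f j with
        | none => exact absurd hfj this
        | some _ => simp
      have : psize fstar ≤ psize f := Finset.card_le_card hsub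
      omega
    obtain ⟨j0, hj0s, hj0f⟩ := hex
    obtain ⟨i0, hstar0⟩ := Option.isSome_iff_exists.1 hj0s
    by_cases hdeg : deg f i0 < t
    · -- direct augmentation
      set f' := Function.update f j0 (some i0) with hf'
      have hf'app : ∀ j, f' j = if j = j0 then some i0 else f j := by
        intro j; rw [hf', Function.update_apply]
      have hfib_ne : ∀ i, i ≠ i0 → fiber f' i = fiber f i := by
        intro i hi
        ext j
        rw [mem_fiber, mem_fiber, hf'app]
        split
        · rename_i hj; subst hj
          constructor
          · intro h; exact (hi (Option.some_inj.1 h).symm).elim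
          · intro h; rw [hj0f] at h; exact absurd h (by simp)
        · exact Iff.rfl
      have hfib0 : fiber f' i0 = insert j0 (fiber f i0) := by
        ext j
        rw [mem_fiber, Finset.mem_insert, mem_fiber, hf'app]
        split
        · rename_i hj; subst hj; simp
        · rename_i hj; simp [hj]
      have hj0not : j0 ∉ fiber f i0 := by
        rw [mem_fiber, hj0f]; simp
      have hdeg0 : deg f' i0 = deg f i0 + 1 := by
        unfold deg
        rw [hfib0, Finset.card_insert_of_notMem hj0not]
      refine ⟨f', i0, ?_, ?_, ?_, hdeg0, fun i hi => by unfold deg; rw [hfib_ne i hi]⟩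
      · intro j i h
        rw [hf'app] at h
        split at h
        · rename_i hj; subst hj
          rw [Option.some_inj] at h; subst h
          exact hsc _ _ hstar0
        · exact hc j i h
      · intro i
        by_cases hi : i = i0
        · subst hi; omega
        · unfold deg; rw [hfib_ne i hi]; exact hdegle i
      · -- psize
        unfold psize
        have : (Finset.univ.filter (fun j => (f' j).isSome)) =
            insert j0 (Finset.univ.filter (fun j => (f j).isSome)) := by
          ext j
          rw [Finset.mem_filter, Finset.mem_insert, Finset.mem_filter, hf'app]
          split
          · rename_i hj; subst hj; simp
          · rename_i hj; simp [hj]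
        rw [this, Finset.card_insert_of_notMem (by simp [hj0f])]
    · -- row i0 is full : swap
      have hdeq : deg f i0 = t := le_antisymm (hdegle i0) (not_lt.1 hdeg)
      have hexj1 : ∃ j1, f j1 = some i0 ∧ fstar j1 ≠ some i0 := by
        by_contra hcon
        push_neg at hcon
        have hsub : insert j0 (fiber f i0) ⊆ fiber fstar i0 := by
          intro j hj
          rw [Finset.mem_insert] at hj
          rw [mem_fiber]
          rcases hj with rfl | hj
          · exact hstar0
          · exact hcon j (mem_fiber.1 hj)
        have hcard : (insert j0 (fiber f i0)).card = t + 1 := by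
          rw [Finset.card_insert_of_notMem (by rw [mem_fiber, hj0f]; simp)]
          unfold deg at hdeq; omega
        have := Finset.card_le_card hsub
        have := hsd i0
        unfold deg at this
        omega
      obtain ⟨j1, hj1f, hj1s⟩ := hexj1
      have hj01 : j0 ≠ j1 := by
        intro h; rw [h, hj1f] at hj0f; exact absurd hj0f (by simp)
      set f1 := Function.update (Function.update f j1 none) j0 (some i0) with hf1
      have hf1app : ∀ j, f1 j = if j = j0 then some i0 else if j = j1 then none else f j := by
        intro j; rw [hf1, Function.update_apply, Function.update_apply]
      have hf1j0 : f1 j0 = some i0 := by rw [hf1app]; simp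
      have hf1j1 : f1 j1 = none := by rw [hf1app]; simp [Ne.symm hj01]
      -- fibers
      have hfib_ne : ∀ i, i ≠ i0 → fiber f1 i = fiber f i := by
        intro i hi
        ext j
        rw [mem_fiber, mem_fiber, hf1app]
        split
        · rename_i hj; subst hj
          constructor
          · intro h; exact (hi (Option.some_inj.1 h).symm).elim
          · intro h; rw [hj0f] at h; exact absurd h (by simp)
        · split
          · rename_i hj; subst hj
            constructor
            · intro h; exact absurd h (by simp)
            · intro h; rw [hj1f] at h
              exact (hi (Option.some_inj.1 h).symm).elim
          · exact Iff.rfl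
      have hfib0 : fiber f1 i0 = insert j0 ((fiber f i0).erase j1) := by
        ext j
        rw [mem_fiber, Finset.mem_insert, Finset.mem_erase, mem_fiber, hf1app]
        split
        · rename_i hj; subst hj; simp
        · rename_i hj
          split
          · rename_i hj'; subst hj'
            simp [hj]
          · rename_i hj'
            constructor
            · intro h; exact Or.inr ⟨hj', h⟩
            · rintro (rfl | ⟨_, h⟩)
              · exact absurd rfl hj
              · exact h
      have hj1mem : j1 ∈ fiber f i0 := mem_fiber.2 hj1f
      have hj0notmem : j0 ∉ (fiber f i0).erase j1 := by
        intro h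
        exact absurd (mem_fiber.1 (Finset.mem_of_mem_erase h)) (by rw [hj0f]; simp)
      have hdeg1 : ∀ i, deg f1 i = deg f i := by
        intro i
        by_cases hi : i = i0
        · rw [hi]
          unfold deg
          rw [hfib0, Finset.card_insert_of_notMem hj0notmem,
            Finset.card_erase_of_mem hj1mem]
          have : 0 < (fiber f i0).card := Finset.card_pos.2 ⟨j1, hj1mem⟩
          omega
        · unfold deg; rw [hfib_ne i hi]
      have hpsize1 : psize f1 = psize f := by
        unfold psize
        have hset : (Finset.univ.filter (fun j => (f1 j).isSome)) =
            insert j0 ((Finset.univ.filter (fun j => (f j).isSome)).erase j1) := by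
          ext j
          rw [Finset.mem_filter, Finset.mem_insert, Finset.mem_erase, Finset.mem_filter,
            hf1app]
          split
          · rename_i hj; subst hj; simp
          · rename_i hj
            split
            · rename_i hj'; subst hj'
              simp [hj]
            · rename_i hj'
              constructor
              · intro h; exact Or.inr ⟨hj', ⟨Finset.mem_univ _, h.2⟩⟩
              · rintro (rfl | ⟨_, h⟩)
                · exact absurd rfl hj
                · exact ⟨Finset.mem_univ _, h.2⟩
        rw [hset, Finset.card_insert_of_notMem, Finset.card_erase_of_mem]
        · have hj1in : j1 ∈ Finset.univ.filter (fun j => (f j).isSome) := by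
            rw [Finset.mem_filter]; exact ⟨Finset.mem_univ _, by rw [hj1f]; simp⟩
          have : 0 < (Finset.univ.filter (fun j => (f j).isSome)).card :=
            Finset.card_pos.2 ⟨j1, hj1in⟩
          omega
        · rw [Finset.mem_filter]; exact ⟨Finset.mem_univ _, by rw [hj1f]; simp⟩
        · intro h
          have := (Finset.mem_filter.1 (Finset.mem_of_mem_erase h)).2
          rw [hj0f] at this; simp at this
      have hc1 : pCompat A f1 := by
        intro j i h
        rw [hf1app] at h
        split at h
        · rename_i hj; subst hj
          rw [Option.some_inj] at h; subst h
          exact hsc _ _ hstar0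
        · split at h
          · exact absurd h (by simp)
          · exact hc j i h
      -- discrepancy set decreases
      set D := fun (g : Fin n → Option (Fin m)) =>
        Finset.univ.filter (fun j => (fstar j).isSome ∧ g j ≠ fstar j) with hD
      have hssub : D f1 ⊂ D f := by
        constructor
        · intro j hj
          rw [hD] at hj ⊢
          rw [Finset.mem_filter] at hj ⊢
          refine ⟨Finset.mem_univ _, hj.2.1, ?_⟩
          have h2 := hj.2.2
          rw [hf1app] at h2
          split at h2
          · rename_i hj'; subst hj'
            rw [hstar0] at h2; exact absurd rfl h2
          · split at h2
            · rename_i hj'; subst hj'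
              rw [hj1f]
              intro hcc; exact hj1s hcc.symm
            · exact h2
        · intro hsub
          have hj0D : j0 ∈ D f := by
            rw [hD, Finset.mem_filter]
            refine ⟨Finset.mem_univ _, hj0s, ?_⟩
            rw [hj0f, hstar0]; simp
          have := hsub hj0D
          rw [hD, Finset.mem_filter] at this
          have h2 := this.2.2
          rw [hf1j0, hstar0] at h2
          exact h2 rfl
      have hcardlt : (D f1).card < d := by
        rw [← hd]
        exact Finset.card_lt_card hssub
      obtain ⟨f', i0', hc', hdle', hps', hdeg', hdeg'2⟩ :=
        IH (D f1).card hcardlt f1 rfl hc1 (fun i => by rw [hdeg1]; exact hdegle i)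
          (by rw [hpsize1]; exact hlt)
      refine ⟨f', i0', hc', hdle', ?_, ?_, ?_⟩
      · rw [hps', hpsize1]
      · rw [hdeg', hdeg1]
      · intro i hi; rw [hdeg'2 i hi, hdeg1]

def fullrows (t : ℕ) (p : Fin n → Option (Fin m)) : ℕ :=
  (Finset.univ.filter (fun i => deg p i = t)).card

noncomputable def trim (t : ℕ) (p : Fin n → Option (Fin m)) : Fin n → Option (Fin m) :=
  fun j => if ∃ i, p j = some i ∧ deg p i = t ∧ ∀ j', p j' = some i → j ≤ j' then none
    else p j

lemma trim_sub (t : ℕ) (p : Fin n → Option (Fin m)) (j : Fin n) (i : Fin m)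
    (h : trim t p j = some i) : p j = some i := by
  unfold trim at h
  split at h
  · exact absurd h (by simp)
  · exact h

lemma fiber_trim_of_ne (t : ℕ) (p : Fin n → Option (Fin m)) (i : Fin m)
    (h : deg p i ≠ t) : fiber (trim t p) i = fiber p i := by
  ext j
  rw [mem_fiber, mem_fiber]
  constructor
  · exact trim_sub t p j i
  · intro hj
    unfold trim
    rw [if_neg, hj]
    rintro ⟨i', hi'1, hi'2, _⟩
    rw [hj] at hi'1
    exact h ((Option.some_inj.1 hi'1) ▸ hi'2)

lemma fiber_trim_of_eq (t : ℕ) (p : Fin n → Option (Fin m)) (i : Fin m)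
    (h : deg p i = t) (ht : 1 ≤ t) :
    ∃ j0 ∈ fiber p i, fiber (trim t p) i = (fiber p i).erase j0 := by
  have hne : (fiber p i).Nonempty := by
    rw [← Finset.card_pos]
    unfold deg at h; omega
  set j0 := (fiber p i).min' hne with hj0
  refine ⟨j0, (fiber p i).min'_mem hne, ?_⟩
  ext j
  rw [Finset.mem_erase, mem_fiber, mem_fiber]
  constructor
  · intro hj
    have hpj : p j = some i := trim_sub t p j i hj
    refine ⟨?_, hpj⟩
    intro hjj0
    unfold trim at hj
    rw [if_pos] at hj
    · exact absurd hj (by simp)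
    · refine ⟨i, hpj, h, ?_⟩
      intro j' hj'
      rw [hjj0]
      exact (fiber p i).min'_le j' (mem_fiber.2 hj')
  · rintro ⟨hjne, hpj⟩
    unfold trim
    rw [if_neg, hpj]
    rintro ⟨i', hi'1, _, hi'3⟩
    rw [hpj, Option.some_inj] at hi'1
    subst hi'1
    -- j is ≤ everything in fiber, so j = min
    apply hjne
    have h1 : j ≤ j0 := hi'3 j0 (mem_fiber.1 ((fiber p i).min'_mem hne))
    have h2 : j0 ≤ j := (fiber p i).min'_le j (mem_fiber.2 hpj)
    exact le_antisymm h1 h2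

lemma deg_trim (t : ℕ) (ht : 1 ≤ t) (p : Fin n → Option (Fin m)) (i : Fin m) :
    deg (trim t p) i + (if deg p i = t then 1 else 0) = deg p i := by
  by_cases h : deg p i = t
  · rw [if_pos h]
    obtain ⟨j0, hj0, hfib⟩ := fiber_trim_of_eq t p i h ht
    unfold deg
    rw [hfib, Finset.card_erase_of_mem hj0]
    have : 0 < (fiber p i).card := Finset.card_pos.2 ⟨j0, hj0⟩
    omega
  · rw [if_neg h]
    unfold deg
    rw [fiber_trim_of_ne t p i h]
    omega

lemma psize_trim (t : ℕ) (ht : 1 ≤ t) (p : Fin n → Option (Fin m)) :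
    psize (trim t p) + fullrows t p = psize p := by
  rw [psize_eq_sum_deg, psize_eq_sum_deg]
  unfold fullrows
  rw [Finset.card_filter, ← Finset.sum_add_distrib]
  exact Finset.sum_congr rfl fun i _ => deg_trim t ht p i

lemma deg_trim_le (t : ℕ) (ht : 1 ≤ t) (p : Fin n → Option (Fin m)) (i : Fin m)
    (hle : deg p i ≤ t) : deg (trim t p) i ≤ t - 1 := by
  have := deg_trim t ht p i
  by_cases h : deg p i = t
  · rw [if_pos h] at this; omega
  · rw [if_neg h] at this; omega

lemma build (s : ℕ) (A : Matrix (Fin m) (Fin n) ℕ) :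
    ∀ k : ℕ, sSup (VSet s A) + k ≤ sSup (VSet (s+1) A) →
    ∃ p : Fin n → Option (Fin m), pCompat A p ∧ (∀ i, deg p i ≤ s+1) ∧
      psize p = sSup (VSet s A) + k ∧ fullrows (s+1) p ≤ k := by
  intro k
  induction k with
  | zero =>
    intro _
    obtain ⟨q, hq1, hq2, hq3⟩ := exists_realizer s A
    refine ⟨q, hq1, fun i => le_trans (hq2 i) (Nat.le_succ s), by omega, ?_⟩
    unfold fullrows
    have : (Finset.univ.filter (fun i => deg q i = s+1)) = ∅ := by
      rw [Finset.filter_eq_empty_iff]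
      intro i _
      have := hq2 i
      omega
    rw [this]
    simp
  | succ k IH =>
    intro hk
    obtain ⟨p, hp1, hp2, hp3, hp4⟩ := IH (by omega)
    obtain ⟨fstar, hf1, hf2, hf3⟩ := exists_realizer (s+1) A
    have hlt : psize p < psize fstar := by omega
    obtain ⟨p', i0, hc', hd', hps', hdeg', hdeg'2⟩ :=
      aug (s+1) A fstar hf1 hf2 _ p rfl hp1 hp2 hlt
    refine ⟨p', hc', hd', by omega, ?_⟩
    have hsub : (Finset.univ.filter (fun i => deg p' i = s+1)) ⊆
        insert i0 (Finset.univ.filter (fun i => deg p i = s+1)) := by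
      intro i hi
      rw [Finset.mem_filter] at hi
      rw [Finset.mem_insert]
      by_cases h : i = i0
      · exact Or.inl h
      · refine Or.inr ?_
        rw [Finset.mem_filter]
        exact ⟨Finset.mem_univ _, by rw [← hdeg'2 i h]; exact hi.2⟩
    calc fullrows (s+1) p' ≤ (insert i0 (Finset.univ.filter (fun i => deg p i = s+1))).card :=
          Finset.card_le_card hsub
      _ ≤ fullrows (s+1) p + 1 := Finset.card_insert_le _ _
      _ ≤ k + 1 := by omega

end TermRankAux

/-- For `t ≥ 2`, there are (0,1)-matrices `C ≤ B ≤ A` with `B` realizing `ρ_t(A)`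
(row sums at most `t`, column sums at most 1) and `C` realizing `ρ_{t-1}(A)`
(row sums at most `t-1`, column sums at most 1). -/
theorem exists_nested_realizers (m n t : ℕ) (ht : 2 ≤ t)
    (A : Matrix (Fin m) (Fin n) ℕ) (hA : ∀ i j, A i j ≤ 1) :
    ∃ B C : Matrix (Fin m) (Fin n) ℕ,
      (∀ i j, C i j ≤ B i j) ∧ (∀ i j, B i j ≤ A i j) ∧
      (∀ i, ∑ j, B i j ≤ t) ∧ (∀ j, ∑ i, B i j ≤ 1) ∧
      (∑ i, ∑ j, B i j) = tTermRank t A ∧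
      (∀ i, ∑ j, C i j ≤ t - 1) ∧ (∀ j, ∑ i, C i j ≤ 1) ∧
      (∑ i, ∑ j, C i j) = tTermRank (t - 1) A := by
  classical
  open TermRankAux in
  obtain ⟨s, rfl⟩ : ∃ s, t = s + 1 := ⟨t - 1, by omega⟩
  have hs : 1 ≤ s := by omega
  set ρ := sSup (VSet (s+1) A) with hρ
  set ρ' := sSup (VSet s A) with hρ'
  -- ρ' ≤ ρ
  have hρ'le : ρ' ≤ ρ := by
    obtain ⟨q, hq1, hq2, hq3⟩ := exists_realizer s A
    have hle := psize_le_sSup (t := s+1) q hq1 (fun i => le_trans (hq2 i) (Nat.le_succ s))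
    omega
  -- minimal number of full rows among realizers of ρ
  set F : Set ℕ := {k | ∃ p : Fin n → Option (Fin m), pCompat A p ∧ (∀ i, deg p i ≤ s+1) ∧
      psize p = ρ ∧ fullrows (s+1) p = k} with hF
  have hFne : F.Nonempty := by
    obtain ⟨q, hq1, hq2, hq3⟩ := exists_realizer (s+1) A
    exact ⟨fullrows (s+1) q, q, hq1, hq2, hq3, rfl⟩
  obtain ⟨pB, hpB1, hpB2, hpB3, hpB4⟩ := Nat.sInf_mem hFne
  set r := sInf F with hr
  -- r ≤ ρ - ρ'
  have hrle : r + ρ' ≤ ρ := by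
    obtain ⟨p, hp1, hp2, hp3, hp4⟩ := build s A (ρ - ρ') (by omega)
    have hmem : fullrows (s+1) p ∈ F := ⟨p, hp1, hp2, by omega, rfl⟩
    have := Nat.sInf_le hmem
    omega
  -- trim pB
  set g := trim (s+1) pB with hg
  have hgsub : ∀ j i, g j = some i → pB j = some i := fun j i h => trim_sub (s+1) pB j i h
  have hgc : pCompat A g := fun j i h => hpB1 j i (hgsub j i h)
  have hgd : ∀ i, deg g i ≤ s := by
    intro i
    have := deg_trim_le (s+1) (by omega) pB i (hpB2 i)
    simpa using this
  have hgsize : psize g + r = ρ := by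
    have := psize_trim (s+1) (by omega) pB
    rw [hpB4, hpB3] at this
    exact this
  have hgle : psize g ≤ ρ' := psize_le_sSup g hgc hgd
  have hgeq : psize g = ρ' := by omega
  -- assemble matrices
  refine ⟨pmMat pB, pmMat g, ?_, ?_, ?_, ?_, ?_, ?_, ?_, ?_⟩
  · intro i j
    unfold pmMat
    split
    · rename_i h
      rw [if_pos (hgsub j i h)]
    · exact Nat.zero_le _
  · intro i j
    unfold pmMat
    split
    · rename_i h; exact hpB1 j i h
    · exact Nat.zero_le _
  · intro i; rw [pmMat_row]; exact hpB2 i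
  · intro j; rw [pmMat_col]; split <;> omega
  · rw [pmMat_total, hpB3, tTermRank_eq]
  · intro i; rw [pmMat_row]
    simpa using hgd i
  · intro j; rw [pmMat_col]; split <;> omega
  · rw [pmMat_total, hgeq, tTermRank_eq]
    congr 1
end

section
/- If A is an m×n (0,1)-matrix, then the sequence ρ_0(A), ρ_1(A), ρ_2(A), … (with ρ_0(A) = 0) is concave: ρ_k(A) − ρ_{k−1}(A) ≥ ρ_{k+1}(A) − ρ_k(A) for every integer k ≥ 1. -/
open scoped BigOperators

section AuxTTR

private lemma sum_split' {ι : Type*} [Fintype ι] [DecidableEq ι] (f : ι → ℕ) (j : ι) :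
    ∑ j', f j' = f j + ∑ j' ∈ Finset.univ.erase j, f j' :=
  (Finset.add_sum_erase _ f (Finset.mem_univ j)).symm

private lemma sum_if_single' {ι : Type*} [Fintype ι] [DecidableEq ι] (j : ι) (v : ℕ) (f : ι → ℕ) :
    (∑ j', if j' = j then v else f j') + f j = (∑ j', f j') + v := by
  have h1 : (∑ j', if j' = j then v else f j')
      = v + ∑ j' ∈ Finset.univ.erase j, f j' := by
    rw [sum_split' (fun j' => if j' = j then v else f j') j]
    simp only [if_pos rfl]
    congr 1
    exact Finset.sum_congr rfl fun x hx => if_neg (Finset.ne_of_mem_erase hx)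
  have h2 := sum_split' f j
  omega

private lemma sum_eq_card' {ι : Type*} [DecidableEq ι] (s : Finset ι) (f : ι → ℕ)
    (h : ∀ x ∈ s, f x ≤ 1) :
    ∑ x ∈ s, f x = (s.filter fun x => f x = 1).card := by
  rw [Finset.card_filter]
  refine Finset.sum_congr rfl fun x hx => ?_
  have := h x hx
  split <;> omega

private lemma col_unique' {m n : ℕ} (B : Matrix (Fin m) (Fin n) ℕ) (j : Fin n) {i r : Fin m}
    (hri : r ≠ i) (hcol : ∑ r', B r' j ≤ 1) (hij : B i j = 1) : B r j = 0 := by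
  have h2 : ∑ r', B r' j = B i j + ∑ r' ∈ Finset.univ.erase i, B r' j :=
    sum_split' (fun r' => B r' j) i
  have hb : B r j ≤ ∑ r' ∈ Finset.univ.erase i, B r' j :=
    Finset.single_le_sum (f := fun r' => B r' j) (fun _ _ => Nat.zero_le _)
      (Finset.mem_erase.mpr ⟨hri, Finset.mem_univ r⟩)
  omega

private lemma card_filter_insert' {n : ℕ} (F : Finset (Fin n)) (j : Fin n) (hjF : j ∉ F)
    (f g : Fin n → ℕ) (hagree : ∀ x ∈ F, f x = g x) :
    ((insert j F).filter fun x => f x = 1).card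
      = (F.filter fun x => g x = 1).card + (if f j = 1 then 1 else 0) := by
  rw [Finset.filter_insert]
  have hfg : F.filter (fun x => f x = 1) = F.filter (fun x => g x = 1) :=
    Finset.filter_congr (fun x hx => by rw [hagree x hx])
  split
  next h => rw [Finset.card_insert_of_notMem (fun hmem => hjF (Finset.mem_of_mem_filter _ hmem)), hfg]
  next h => rw [hfg]; omega

private lemma tot_eq' {m n : ℕ} (B' C' B C : Matrix (Fin m) (Fin n) ℕ)
    (hpw : ∀ r j', B' r j' + C' r j' = B r j' + C r j') :
    (∑ r, ∑ j', B' r j') + (∑ r, ∑ j', C' r j') = (∑ r, ∑ j', B r j') + (∑ r, ∑ j', C r j') := by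
  rw [← Finset.sum_add_distrib, ← Finset.sum_add_distrib]
  refine Finset.sum_congr rfl fun r _ => ?_
  rw [← Finset.sum_add_distrib, ← Finset.sum_add_distrib]
  exact Finset.sum_congr rfl fun j' _ => hpw r j'

private lemma fresh' {m n : ℕ} {A : Matrix (Fin m) (Fin n) ℕ} {k : ℕ}
    (hA : ∀ i j, A i j ≤ 1) (F : Finset (Fin n)) (B C : Matrix (Fin m) (Fin n) ℕ) (i : Fin m)
    (hBA : ∀ r j, B r j ≤ A r j) (hCA : ∀ r j, C r j ≤ A r j)
    (hi1 : k + 1 ≤ ∑ j, B i j) (hi3 : ∑ j, B i j + ∑ j, C i j ≤ 2*k)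
    (hFi : (F.filter fun j => B i j = 1).card ≤ (F.filter fun j => C i j = 1).card + 1) :
    ∃ j, j ∉ F ∧ B i j = 1 ∧ C i j = 0 := by
  by_contra hcon
  push_neg at hcon
  have hB1 : ∀ j, B i j ≤ 1 := fun j => (hBA i j).trans (hA i j)
  have hC1 : ∀ j, C i j ≤ 1 := fun j => (hCA i j).trans (hA i j)
  have hsB : (∑ j ∈ Finset.univ \ F, B i j) + ∑ j ∈ F, B i j = ∑ j, B i j :=
    Finset.sum_sdiff (Finset.subset_univ F)
  have hsC : (∑ j ∈ Finset.univ \ F, C i j) + ∑ j ∈ F, C i j = ∑ j, C i j :=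
    Finset.sum_sdiff (Finset.subset_univ F)
  have hFB : ∑ j ∈ F, B i j = (F.filter fun j => B i j = 1).card :=
    sum_eq_card' _ _ (fun x _ => hB1 x)
  have hFC : ∑ j ∈ F, C i j = (F.filter fun j => C i j = 1).card :=
    sum_eq_card' _ _ (fun x _ => hC1 x)
  have hle : ∑ j ∈ Finset.univ \ F, B i j ≤ ∑ j ∈ Finset.univ \ F, C i j := by
    refine Finset.sum_le_sum fun j hj => ?_
    have hjF : j ∉ F := (Finset.mem_sdiff.mp hj).2
    by_cases hb : B i j = 1
    · have := hcon j hjF hb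
      have := hC1 j
      omega
    · have := hB1 j; omega
  omega

end AuxTTR

private lemma walk' {m n : ℕ} (A : Matrix (Fin m) (Fin n) ℕ) (k : ℕ)
    (hA : ∀ i j, A i j ≤ 1) :
    ∀ (N : ℕ) (F : Finset (Fin n)) (B C : Matrix (Fin m) (Fin n) ℕ) (i : Fin m),
    (Finset.univ \ F).card ≤ N →
    (∀ r j, B r j ≤ A r j) → (∀ r j, C r j ≤ A r j) →
    (∀ j, ∑ r, B r j ≤ 1) → (∀ j, ∑ r, C r j ≤ 1) →
    (∀ r, r ≠ i → ((∑ j, B r j ≤ k+1) ∧ (∑ j, C r j ≤ k) ∧ (∑ j, B r j = k+1 → (∑ j, C r j) + 1 ≤ k))) →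
    (k + 1 ≤ ∑ j, B i j) → (∑ j, B i j ≤ k + 2) → (∑ j, B i j + ∑ j, C i j ≤ 2*k) →
    (∀ r, r ≠ i → (F.filter fun j => B r j = 1).card ≤ (F.filter fun j => C r j = 1).card) →
    ((F.filter fun j => B i j = 1).card ≤ (F.filter fun j => C i j = 1).card + 1) →
    ∃ B' C' : Matrix (Fin m) (Fin n) ℕ,
      (∀ r j, B' r j ≤ A r j) ∧ (∀ r j, C' r j ≤ A r j) ∧
      (∀ j, ∑ r, B' r j ≤ 1) ∧ (∀ j, ∑ r, C' r j ≤ 1) ∧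
      ((∑ r, ∑ j, B' r j) + (∑ r, ∑ j, C' r j) = (∑ r, ∑ j, B r j) + (∑ r, ∑ j, C r j)) ∧
      ((∑ j, B' i j) + 1 = ∑ j, B i j) ∧ (∑ j, C' i j = (∑ j, C i j) + 1) ∧
      (∀ r, r ≠ i →
        ((∑ j, B' r j = ∑ j, B r j) ∧ (∑ j, C' r j = ∑ j, C r j)) ∨
        ((∑ j, B' r j = (∑ j, B r j) + 1) ∧ (∑ j, B' r j ≤ k) ∧ ((∑ j, C' r j) + 1 = ∑ j, C r j))) := by
  intro N
  induction N with
  | zero =>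
    intro F B C i hcard hBA hCA hBc hCc hinv hi1 hi2 hi3 hFB hFi
    obtain ⟨j, hjF, -, -⟩ := fresh' hA F B C i hBA hCA hi1 hi3 hFi
    have hmem : j ∈ Finset.univ \ F := Finset.mem_sdiff.mpr ⟨Finset.mem_univ j, hjF⟩
    have := Finset.card_pos.mpr ⟨j, hmem⟩
    omega
  | succ N ih =>
    intro F B C i hcard hBA hCA hBc hCc hinv hi1 hi2 hi3 hFB hFi
    obtain ⟨j, hjF, hBij, hCij⟩ := fresh' hA F B C i hBA hCA hi1 hi3 hFi
    have hB1 : ∀ r j, B r j ≤ 1 := fun r j => (hBA r j).trans (hA r j)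
    have hC1 : ∀ r j, C r j ≤ 1 := fun r j => (hCA r j).trans (hA r j)
    have hBrj : ∀ r, r ≠ i → B r j = 0 := fun r hr => col_unique' B j hr (hBc j) hBij
    by_cases hex : ∃ r, C r j = 1
    · -- Case 2 : column j of C has a one, at row i''
      obtain ⟨i'', hCi''⟩ := hex
      have hii : i'' ≠ i := by intro h; rw [h] at hCi''; omega
      have hiNe : i ≠ i'' := fun h => hii h.symm
      have hBi''j : B i'' j = 0 := hBrj i'' hii
      have hCrj : ∀ r, r ≠ i'' → C r j = 0 := fun r hr => col_unique' C j hr (hCc j) hCi''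
      obtain ⟨B₁, hB₁e⟩ : ∃ B₁ : Matrix (Fin m) (Fin n) ℕ, ∀ r j',
          B₁ r j' = if r = i ∧ j' = j then 0 else if r = i'' ∧ j' = j then 1 else B r j' :=
        ⟨_, fun _ _ => rfl⟩
      obtain ⟨C₁, hC₁e⟩ : ∃ C₁ : Matrix (Fin m) (Fin n) ℕ, ∀ r j',
          C₁ r j' = if r = i ∧ j' = j then 1 else if r = i'' ∧ j' = j then 0 else C r j' :=
        ⟨_, fun _ _ => rfl⟩
      -- pointwise row descriptions
      have hB₁i : ∀ j', B₁ i j' = if j' = j then 0 else B i j' := by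
        intro j'; rw [hB₁e]; by_cases h : j' = j <;> simp [h, hii]
      have hB₁i'' : ∀ j', B₁ i'' j' = if j' = j then 1 else B i'' j' := by
        intro j'; rw [hB₁e]; by_cases h : j' = j <;> simp [h, hii]
      have hB₁r : ∀ r, r ≠ i → r ≠ i'' → ∀ j', B₁ r j' = B r j' := by
        intro r h1 h2 j'; rw [hB₁e]; simp [h1, h2]
      have hC₁i : ∀ j', C₁ i j' = if j' = j then 1 else C i j' := by
        intro j'; rw [hC₁e]; by_cases h : j' = j <;> simp [h, hii]
      have hC₁i'' : ∀ j', C₁ i'' j' = if j' = j then 0 else C i'' j' := by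
        intro j'; rw [hC₁e]; by_cases h : j' = j <;> simp [h, hii]
      have hC₁r : ∀ r, r ≠ i → r ≠ i'' → ∀ j', C₁ r j' = C r j' := by
        intro r h1 h2 j'; rw [hC₁e]; simp [h1, h2]
      -- entries at column j
      have hB₁ij : B₁ i j = 0 := by rw [hB₁i]; simp
      have hB₁i''j : B₁ i'' j = 1 := by rw [hB₁i'']; simp
      have hC₁ij : C₁ i j = 1 := by rw [hC₁i]; simp
      have hC₁i''j : C₁ i'' j = 0 := by rw [hC₁i'']; simp
      -- row sums
      have hrB₁i : (∑ j', B₁ i j') + 1 = ∑ j', B i j' := by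
        rw [Finset.sum_congr rfl fun j' _ => hB₁i j']
        have := sum_if_single' j 0 (B i)
        omega
      have hrB₁i'' : ∑ j', B₁ i'' j' = (∑ j', B i'' j') + 1 := by
        rw [Finset.sum_congr rfl fun j' _ => hB₁i'' j']
        have := sum_if_single' j 1 (B i'')
        omega
      have hrC₁i : ∑ j', C₁ i j' = (∑ j', C i j') + 1 := by
        rw [Finset.sum_congr rfl fun j' _ => hC₁i j']
        have := sum_if_single' j 1 (C i)
        omega
      have hrC₁i'' : (∑ j', C₁ i'' j') + 1 = ∑ j', C i'' j' := by
        rw [Finset.sum_congr rfl fun j' _ => hC₁i'' j']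
        have := sum_if_single' j 0 (C i'')
        omega
      have hrB₁r : ∀ r, r ≠ i → r ≠ i'' → ∑ j', B₁ r j' = ∑ j', B r j' :=
        fun r h1 h2 => Finset.sum_congr rfl fun j' _ => hB₁r r h1 h2 j'
      have hrC₁r : ∀ r, r ≠ i → r ≠ i'' → ∑ j', C₁ r j' = ∑ j', C r j' :=
        fun r h1 h2 => Finset.sum_congr rfl fun j' _ => hC₁r r h1 h2 j'
      -- entry bounds
      have hB₁A : ∀ r j', B₁ r j' ≤ A r j' := by
        intro r j'; rw [hB₁e]
        split
        · exact Nat.zero_le _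
        · split
          next h1 h2 =>
            rw [h2.1, h2.2]
            have := hCA i'' j
            omega
          next h1 h2 => exact hBA r j'
      have hC₁A : ∀ r j', C₁ r j' ≤ A r j' := by
        intro r j'; rw [hC₁e]
        split
        next h =>
          rw [h.1, h.2]
          have := hBA i j
          omega
        · split
          · exact Nat.zero_le _
          · exact hCA r j'
      -- column descriptions at j
      have hB₁colj : ∀ r, B₁ r j = if r = i then 0 else if r = i'' then 1 else B r j := by
        intro r; rw [hB₁e]; by_cases h1 : r = i <;> by_cases h2 : r = i'' <;> simp [h1, h2]
      have hC₁colj : ∀ r, C₁ r j = if r = i then 1 else if r = i'' then 0 else C r j := by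
        intro r; rw [hC₁e]; by_cases h1 : r = i <;> by_cases h2 : r = i'' <;> simp [h1, h2]
      -- column sums
      have hcB₁ : ∀ j'', ∑ r, B₁ r j'' ≤ 1 := by
        intro j''
        by_cases hj : j'' = j
        · rw [hj]
          rw [Finset.sum_congr rfl fun r _ => hB₁colj r]
          have h1 : (∑ r, if r = i then 0 else if r = i'' then (1:ℕ) else B r j)
              + (if i = i'' then (1:ℕ) else B i j)
              = (∑ r, if r = i'' then (1:ℕ) else B r j) + 0 :=
            sum_if_single' i 0 _
          rw [if_neg hiNe] at h1
          have h2 : (∑ r, if r = i'' then (1:ℕ) else B r j) + B i'' j = (∑ r, B r j) + 1 :=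
            sum_if_single' i'' 1 _
          have := hBc j
          omega
        · rw [Finset.sum_congr rfl fun r _ => (by rw [hB₁e]; simp [hj] : B₁ r j'' = B r j'')]
          exact hBc j''
      have hcC₁ : ∀ j'', ∑ r, C₁ r j'' ≤ 1 := by
        intro j''
        by_cases hj : j'' = j
        · rw [hj]
          rw [Finset.sum_congr rfl fun r _ => hC₁colj r]
          have h1 : (∑ r, if r = i then 1 else if r = i'' then (0:ℕ) else C r j)
              + (if i = i'' then (0:ℕ) else C i j)
              = (∑ r, if r = i'' then (0:ℕ) else C r j) + 1 :=
            sum_if_single' i 1 _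
          rw [if_neg hiNe] at h1
          have h2 : (∑ r, if r = i'' then (0:ℕ) else C r j) + C i'' j = (∑ r, C r j) + 0 :=
            sum_if_single' i'' 0 _
          have := hCc j
          omega
        · rw [Finset.sum_congr rfl fun r _ => (by rw [hC₁e]; simp [hj] : C₁ r j'' = C r j'')]
          exact hCc j''
      -- total preservation
      have hpw : ∀ r j', B₁ r j' + C₁ r j' = B r j' + C r j' := by
        intro r j'; rw [hB₁e, hC₁e]
        by_cases h1 : r = i ∧ j' = j
        · rw [if_pos h1, if_pos h1, h1.1, h1.2, hBij, hCij]
        · rw [if_neg h1, if_neg h1]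
          by_cases h2 : r = i'' ∧ j' = j
          · rw [if_pos h2, if_pos h2, h2.1, h2.2, hBi''j, hCi'']
          · rw [if_neg h2, if_neg h2]
      have htot₁ := tot_eq' B₁ C₁ B C hpw
      -- filter card bookkeeping
      have hagreeB : ∀ r, ∀ x ∈ F, B₁ r x = B r x := by
        intro r x hx
        have hxj : x ≠ j := fun h => hjF (h ▸ hx)
        rw [hB₁e]; simp [hxj]
      have hagreeC : ∀ r, ∀ x ∈ F, C₁ r x = C r x := by
        intro r x hx
        have hxj : x ≠ j := fun h => hjF (h ▸ hx)
        rw [hC₁e]; simp [hxj]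
      have hfB : ∀ r, ((insert j F).filter fun j' => B₁ r j' = 1).card
          = (F.filter fun j' => B r j' = 1).card + (if B₁ r j = 1 then 1 else 0) :=
        fun r => card_filter_insert' F j hjF _ _ (hagreeB r)
      have hfC : ∀ r, ((insert j F).filter fun j' => C₁ r j' = 1).card
          = (F.filter fun j' => C r j' = 1).card + (if C₁ r j = 1 then 1 else 0) :=
        fun r => card_filter_insert' F j hjF _ _ (hagreeC r)
      by_cases hsmall : (∑ j', B i'' j') + 1 ≤ k
      · -- terminate the walk here
        refine ⟨B₁, C₁, hB₁A, hC₁A, hcB₁, hcC₁, htot₁, hrB₁i, hrC₁i, ?_⟩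
        intro r hr
        by_cases hr2 : r = i''
        · rw [hr2]
          exact Or.inr ⟨hrB₁i'', by omega, hrC₁i''⟩
        · exact Or.inl ⟨hrB₁r r hr hr2, hrC₁r r hr hr2⟩
      · -- continue the walk from row i''
        have hjmem : j ∈ Finset.univ \ F := Finset.mem_sdiff.mpr ⟨Finset.mem_univ j, hjF⟩
        have hcard' : (Finset.univ \ insert j F).card ≤ N := by
          have h1 : Finset.univ \ insert j F = (Finset.univ \ F).erase j := by
            ext x
            simp only [Finset.mem_sdiff, Finset.mem_erase, Finset.mem_insert, Finset.mem_univ,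
              true_and]
            tauto
          have h2 := Finset.card_erase_of_mem hjmem
          have h3 := Finset.card_pos.mpr ⟨j, hjmem⟩
          rw [h1]
          omega
        obtain ⟨hIa, hIb, hIc⟩ := hinv i'' hii
        have hinv₁ : ∀ r, r ≠ i'' → ((∑ j', B₁ r j' ≤ k+1) ∧ (∑ j', C₁ r j' ≤ k) ∧
            (∑ j', B₁ r j' = k+1 → (∑ j', C₁ r j') + 1 ≤ k)) := by
          intro r hr
          by_cases hri : r = i
          · rw [hri]
            exact ⟨by omega, by omega, fun h => by omega⟩
          · obtain ⟨a, b, c⟩ := hinv r hri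
            have e1 := hrB₁r r hri hr
            have e2 := hrC₁r r hri hr
            refine ⟨by omega, by omega, fun h => ?_⟩
            have := c (by omega)
            omega
        have hi1₂ : k + 1 ≤ ∑ j', B₁ i'' j' := by omega
        have hi2₂ : ∑ j', B₁ i'' j' ≤ k + 2 := by omega
        have hi3₂ : (∑ j', B₁ i'' j') + ∑ j', C₁ i'' j' ≤ 2 * k := by
          by_cases h : ∑ j', B i'' j' = k + 1
          · have := hIc h; omega
          · omega
        have cardBi : ((insert j F).filter fun j' => B₁ i j' = 1).card
            = (F.filter fun j' => B i j' = 1).card := by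
          rw [hfB i, hB₁ij]; simp
        have cardCi : ((insert j F).filter fun j' => C₁ i j' = 1).card
            = (F.filter fun j' => C i j' = 1).card + 1 := by
          rw [hfC i, hC₁ij]; simp
        have cardBi'' : ((insert j F).filter fun j' => B₁ i'' j' = 1).card
            = (F.filter fun j' => B i'' j' = 1).card + 1 := by
          rw [hfB i'', hB₁i''j]; simp
        have cardCi'' : ((insert j F).filter fun j' => C₁ i'' j' = 1).card
            = (F.filter fun j' => C i'' j' = 1).card := by
          rw [hfC i'', hC₁i''j]; simp
        have cardBr : ∀ r, r ≠ i → r ≠ i'' → ((insert j F).filter fun j' => B₁ r j' = 1).card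
            = (F.filter fun j' => B r j' = 1).card := by
          intro r h1 h2
          rw [hfB r, hB₁r r h1 h2 j, hBrj r h1]; simp
        have cardCr : ∀ r, r ≠ i → r ≠ i'' → ((insert j F).filter fun j' => C₁ r j' = 1).card
            = (F.filter fun j' => C r j' = 1).card := by
          intro r h1 h2
          rw [hfC r, hC₁r r h1 h2 j, hCrj r h2]; simp
        have hFB₂ : ∀ r, r ≠ i'' → ((insert j F).filter fun j' => B₁ r j' = 1).card
            ≤ ((insert j F).filter fun j' => C₁ r j' = 1).card := by
          intro r hr
          by_cases hri : r = i
          · rw [hri, cardBi, cardCi]; omega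
          · rw [cardBr r hri hr, cardCr r hri hr]; exact hFB r hri
        have hFi₂ : ((insert j F).filter fun j' => B₁ i'' j' = 1).card
            ≤ ((insert j F).filter fun j' => C₁ i'' j' = 1).card + 1 := by
          rw [cardBi'', cardCi'']
          have := hFB i'' hii
          omega
        obtain ⟨B', C', hB'A, hC'A, hB'c, hC'c, htot', hrBi2, hrCi2, hrest⟩ :=
          ih (insert j F) B₁ C₁ i'' hcard' hB₁A hC₁A hcB₁ hcC₁ hinv₁ hi1₂ hi2₂ hi3₂ hFB₂ hFi₂
        refine ⟨B', C', hB'A, hC'A, hB'c, hC'c, htot'.trans htot₁, ?_, ?_, ?_⟩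
        · rcases hrest i hiNe with ⟨e1, e2⟩ | ⟨e1, e2, e3⟩ <;> omega
        · rcases hrest i hiNe with ⟨e1, e2⟩ | ⟨e1, e2, e3⟩ <;> omega
        · intro r hr
          by_cases hr2 : r = i''
          · rw [hr2]
            left
            constructor <;> omega
          · have e1 := hrB₁r r hr hr2
            have e2 := hrC₁r r hr hr2
            rcases hrest r hr2 with ⟨f1, f2⟩ | ⟨f1, f2, f3⟩
            · exact Or.inl ⟨by omega, by omega⟩
            · exact Or.inr ⟨by omega, by omega, by omega⟩
    · -- Case 1 : column j of C is empty
      have hCcol : ∀ r, C r j = 0 := by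
        intro r
        by_cases h : C r j = 1
        · exact absurd ⟨r, h⟩ hex
        · have := hC1 r j; omega
      obtain ⟨B', hB'e⟩ : ∃ B' : Matrix (Fin m) (Fin n) ℕ, ∀ r j',
          B' r j' = if r = i ∧ j' = j then 0 else B r j' := ⟨_, fun _ _ => rfl⟩
      obtain ⟨C', hC'e⟩ : ∃ C' : Matrix (Fin m) (Fin n) ℕ, ∀ r j',
          C' r j' = if r = i ∧ j' = j then 1 else C r j' := ⟨_, fun _ _ => rfl⟩
      have hB'i : ∀ j', B' i j' = if j' = j then 0 else B i j' := by
        intro j'; rw [hB'e]; by_cases h : j' = j <;> simp [h]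
      have hC'i : ∀ j', C' i j' = if j' = j then 1 else C i j' := by
        intro j'; rw [hC'e]; by_cases h : j' = j <;> simp [h]
      have hB'r : ∀ r, r ≠ i → ∀ j', B' r j' = B r j' := by
        intro r h1 j'; rw [hB'e]; simp [h1]
      have hC'r : ∀ r, r ≠ i → ∀ j', C' r j' = C r j' := by
        intro r h1 j'; rw [hC'e]; simp [h1]
      refine ⟨B', C', ?_, ?_, ?_, ?_, ?_, ?_, ?_, ?_⟩
      · intro r j'; rw [hB'e]; split
        · exact Nat.zero_le _
        · exact hBA r j'
      · intro r j'; rw [hC'e]; split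
        next h =>
          rw [h.1, h.2]
          have := hBA i j
          omega
        · exact hCA r j'
      · intro j''
        by_cases hj : j'' = j
        · rw [hj]
          have hcol : ∀ r, B' r j = if r = i then 0 else B r j := by
            intro r; rw [hB'e]; by_cases h : r = i <;> simp [h]
          rw [Finset.sum_congr rfl fun r _ => hcol r]
          have h1 : (∑ r, if r = i then (0:ℕ) else B r j) + B i j = (∑ r, B r j) + 0 :=
            sum_if_single' i 0 _
          have := hBc j
          omega
        · rw [Finset.sum_congr rfl fun r _ => (by rw [hB'e]; simp [hj] : B' r j'' = B r j'')]
          exact hBc j''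
      · intro j''
        by_cases hj : j'' = j
        · rw [hj]
          have hcol : ∀ r, C' r j = if r = i then 1 else C r j := by
            intro r; rw [hC'e]; by_cases h : r = i <;> simp [h]
          rw [Finset.sum_congr rfl fun r _ => hcol r]
          have h1 : (∑ r, if r = i then (1:ℕ) else C r j) + C i j = (∑ r, C r j) + 1 :=
            sum_if_single' i 1 _
          have h0 : ∑ r, C r j = 0 := Finset.sum_eq_zero fun r _ => hCcol r
          omega
        · rw [Finset.sum_congr rfl fun r _ => (by rw [hC'e]; simp [hj] : C' r j'' = C r j'')]
          exact hCc j''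
      · refine tot_eq' B' C' B C fun r j' => ?_
        rw [hB'e, hC'e]
        by_cases h : r = i ∧ j' = j
        · rw [if_pos h, if_pos h]
          obtain ⟨h1, h2⟩ := h; subst h1; subst h2
          rw [hBij, hCij]
        · rw [if_neg h, if_neg h]
      · rw [Finset.sum_congr rfl fun j' _ => hB'i j']
        have := sum_if_single' j 0 (B i)
        omega
      · rw [Finset.sum_congr rfl fun j' _ => hC'i j']
        have := sum_if_single' j 1 (C i)
        omega
      · intro r hr
        exact Or.inl ⟨Finset.sum_congr rfl fun j' _ => hB'r r hr j',
          Finset.sum_congr rfl fun j' _ => hC'r r hr j'⟩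

private lemma fixAll' {m n : ℕ} (A : Matrix (Fin m) (Fin n) ℕ) (k : ℕ)
    (hA : ∀ i j, A i j ≤ 1) :
    ∀ (Φ : ℕ) (B C : Matrix (Fin m) (Fin n) ℕ),
    (∀ r j, B r j ≤ A r j) → (∀ r j, C r j ≤ A r j) →
    (∀ j, ∑ r, B r j ≤ 1) → (∀ j, ∑ r, C r j ≤ 1) →
    (∀ r, (∑ j, B r j ≤ k+1) ∧ (∑ j, C r j ≤ k) ∧ (∑ j, B r j = k+1 → (∑ j, C r j) + 1 ≤ k)) →
    (∑ r, ((∑ j, B r j) - k) ≤ Φ) →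
    ∃ B' C' : Matrix (Fin m) (Fin n) ℕ,
      (∀ r j, B' r j ≤ A r j) ∧ (∀ r j, C' r j ≤ A r j) ∧
      (∀ j, ∑ r, B' r j ≤ 1) ∧ (∀ j, ∑ r, C' r j ≤ 1) ∧
      ((∑ r, ∑ j, B' r j) + (∑ r, ∑ j, C' r j) = (∑ r, ∑ j, B r j) + (∑ r, ∑ j, C r j)) ∧
      (∀ r, (∑ j, B' r j ≤ k) ∧ (∑ j, C' r j ≤ k)) := by
  intro Φ
  induction Φ with
  | zero =>
    intro B C hBA hCA hBc hCc hinv hΦ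
    refine ⟨B, C, hBA, hCA, hBc, hCc, rfl, fun r => ⟨?_, (hinv r).2.1⟩⟩
    have h1 : ((∑ j, B r j) - k) ≤ ∑ r', ((∑ j, B r' j) - k) :=
      Finset.single_le_sum (f := fun r' => (∑ j, B r' j) - k)
        (fun _ _ => Nat.zero_le _) (Finset.mem_univ r)
    omega
  | succ Φ ih =>
    intro B C hBA hCA hBc hCc hinv hΦ
    by_cases hall : ∀ r, ∑ j, B r j ≤ k
    · exact ⟨B, C, hBA, hCA, hBc, hCc, rfl, fun r => ⟨hall r, (hinv r).2.1⟩⟩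
    · push_neg at hall
      obtain ⟨i, hi⟩ := hall
      obtain ⟨ha, hb, hc⟩ := hinv i
      have hBik : ∑ j, B i j = k + 1 := by omega
      have hCik := hc hBik
      obtain ⟨B₁, C₁, h1, h2, h3, h4, h5, h6, h7, h8⟩ :=
        walk' A k hA (Finset.univ \ (∅ : Finset (Fin n))).card ∅ B C i le_rfl hBA hCA hBc hCc
          (fun r _ => hinv r) (by omega) (by omega) (by omega)
          (fun r _ => by simp) (by simp)
      have hinv₁ : ∀ r, (∑ j, B₁ r j ≤ k+1) ∧ (∑ j, C₁ r j ≤ k) ∧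
          (∑ j, B₁ r j = k+1 → (∑ j, C₁ r j) + 1 ≤ k) := by
        intro r
        by_cases hr : r = i
        · rw [hr]
          exact ⟨by omega, by omega, fun h => by omega⟩
        · obtain ⟨a, b, c⟩ := hinv r
          rcases h8 r hr with ⟨e1, e2⟩ | ⟨e1, e2, e3⟩
          · refine ⟨by omega, by omega, fun h => ?_⟩
            have := c (by omega); omega
          · exact ⟨by omega, by omega, fun h => by omega⟩
      have hΦ₁ : ∑ r, ((∑ j, B₁ r j) - k) ≤ Φ := by
        have key : ∀ r ∈ Finset.univ.erase i, ((∑ j, B₁ r j) - k) ≤ ((∑ j, B r j) - k) := by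
          intro r hr
          have hr' : r ≠ i := Finset.ne_of_mem_erase hr
          rcases h8 r hr' with ⟨e1, e2⟩ | ⟨e1, e2, e3⟩ <;> omega
        have s1 : ∑ r, ((∑ j, B₁ r j) - k)
            = ((∑ j, B₁ i j) - k) + ∑ r ∈ Finset.univ.erase i, ((∑ j, B₁ r j) - k) :=
          sum_split' _ i
        have s2 : ∑ r, ((∑ j, B r j) - k)
            = ((∑ j, B i j) - k) + ∑ r ∈ Finset.univ.erase i, ((∑ j, B r j) - k) :=
          sum_split' _ i
        have s3 : ∑ r ∈ Finset.univ.erase i, ((∑ j, B₁ r j) - k)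
            ≤ ∑ r ∈ Finset.univ.erase i, ((∑ j, B r j) - k) := Finset.sum_le_sum key
        omega
      obtain ⟨B', C', g1, g2, g3, g4, g5, g6⟩ := ih B₁ C₁ h1 h2 h3 h4 hinv₁ hΦ₁
      exact ⟨B', C', g1, g2, g3, g4, g5.trans h5, g6⟩

/-- Concavity of the sequence `ρ_0(A), ρ_1(A), ρ_2(A), …`:
`ρ_k(A) − ρ_{k−1}(A) ≥ ρ_{k+1}(A) − ρ_k(A)` for all `k ≥ 1`
(note `ρ_0(A) = 0` holds by definition of `tTermRank`). -/
theorem t_term_rank_concave (m n : ℕ) (A : Matrix (Fin m) (Fin n) ℕ)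
    (hA : ∀ i j, A i j ≤ 1) (k : ℕ) (hk : 1 ≤ k) :
    tTermRank (k + 1) A + tTermRank (k - 1) A ≤ 2 * tTermRank k A := by
  classical
  have hmem0 : ∀ t : ℕ, (0:ℕ) ∈ {s : ℕ | ∃ B : Matrix (Fin m) (Fin n) ℕ,
      (∀ i j, B i j ≤ A i j) ∧ (∀ i, ∑ j, B i j ≤ t) ∧ (∀ j, ∑ i, B i j ≤ 1) ∧
      s = ∑ i, ∑ j, B i j} := by
    intro t
    exact ⟨fun _ _ => 0, fun i j => Nat.zero_le _, fun i => by simp, fun j => by simp, by simp⟩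
  have hbdd : ∀ t : ℕ, BddAbove {s : ℕ | ∃ B : Matrix (Fin m) (Fin n) ℕ,
      (∀ i j, B i j ≤ A i j) ∧ (∀ i, ∑ j, B i j ≤ t) ∧ (∀ j, ∑ i, B i j ≤ 1) ∧
      s = ∑ i, ∑ j, B i j} := by
    intro t
    refine ⟨n, fun s hs => ?_⟩
    obtain ⟨B, h1, h2, h3, h4⟩ := hs
    have hcomm : ∑ i, ∑ j, B i j = ∑ j, ∑ i, B i j := Finset.sum_comm
    have h5 : ∑ j : Fin n, ∑ i, B i j ≤ ∑ _j : Fin n, 1 := Finset.sum_le_sum fun j _ => h3 j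
    simp only [Finset.sum_const, Finset.card_univ, Fintype.card_fin, smul_eq_mul, mul_one] at h5
    omega
  have hmemSup : ∀ t : ℕ, tTermRank t A ∈ {s : ℕ | ∃ B : Matrix (Fin m) (Fin n) ℕ,
      (∀ i j, B i j ≤ A i j) ∧ (∀ i, ∑ j, B i j ≤ t) ∧ (∀ j, ∑ i, B i j ≤ 1) ∧
      s = ∑ i, ∑ j, B i j} := fun t => Nat.sSup_mem ⟨0, hmem0 t⟩ (hbdd t)
  have hub : ∀ t s, s ∈ {s : ℕ | ∃ B : Matrix (Fin m) (Fin n) ℕ,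
      (∀ i j, B i j ≤ A i j) ∧ (∀ i, ∑ j, B i j ≤ t) ∧ (∀ j, ∑ i, B i j ≤ 1) ∧
      s = ∑ i, ∑ j, B i j} → s ≤ tTermRank t A := fun t s hs => le_csSup (hbdd t) hs
  obtain ⟨B, hBA, hBrow, hBcol, hBsum⟩ := hmemSup (k+1)
  obtain ⟨C, hCA, hCrow, hCcol, hCsum⟩ := hmemSup (k-1)
  obtain ⟨B', C', g1, g2, g3, g4, g5, g6⟩ :=
    fixAll' A k hA (∑ r, ((∑ j, B r j) - k)) B C hBA hCA hBcol hCcol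
      (fun r => ⟨hBrow r, by have := hCrow r; omega, fun _ => by have := hCrow r; omega⟩)
      le_rfl
  have m1 : (∑ i, ∑ j, B' i j) ≤ tTermRank k A :=
    hub k _ ⟨B', g1, fun r => (g6 r).1, g3, rfl⟩
  have m2 : (∑ i, ∑ j, C' i j) ≤ tTermRank k A :=
    hub k _ ⟨C', g2, fun r => (g6 r).2, g4, rfl⟩
  omega
end

section
/- Let A be an m×n (0,1)-matrix, let t be a positive integer, and let A' be obtained from A by a single interchange. Then ρ_t(A) − 1 ≤ ρ_t(A') ≤ ρ_t(A) + 1. -/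
open scoped BigOperators

/-- `A'` is obtained from `A` by a single interchange: a `2×2` submatrix of `A` equal to
`[[1,0],[0,1]]` or `[[0,1],[1,0]]` is replaced by the other, all other entries unchanged. -/
def Interchange {m n : ℕ} (A A' : Matrix (Fin m) (Fin n) ℕ) : Prop :=
  ∃ (i₁ i₂ : Fin m) (j₁ j₂ : Fin n), i₁ ≠ i₂ ∧ j₁ ≠ j₂ ∧
    ((A i₁ j₁ = 1 ∧ A i₁ j₂ = 0 ∧ A i₂ j₁ = 0 ∧ A i₂ j₂ = 1) ∨
     (A i₁ j₁ = 0 ∧ A i₁ j₂ = 1 ∧ A i₂ j₁ = 1 ∧ A i₂ j₂ = 0)) ∧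
    A' i₁ j₁ = A i₁ j₂ ∧ A' i₁ j₂ = A i₁ j₁ ∧ A' i₂ j₁ = A i₂ j₂ ∧ A' i₂ j₂ = A i₂ j₁ ∧
    (∀ i j, ¬((i = i₁ ∨ i = i₂) ∧ (j = j₁ ∨ j = j₂)) → A' i j = A i j)

lemma sum_pair_congr' {β : Type*} [Fintype β] [DecidableEq β] (f g : β → ℕ) (a b : β)
    (hab : a ≠ b) (h : ∀ x, x ≠ a → x ≠ b → f x = g x) :
    (∑ x, f x) + (g a + g b) = (∑ x, g x) + (f a + f b) := by
  classical
  have hsub : ({a, b} : Finset β) ⊆ Finset.univ := Finset.subset_univ _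
  have hf : ∑ x, f x = (∑ x ∈ Finset.univ \ {a, b}, f x) + (f a + f b) := by
    rw [← Finset.sum_pair hab, Finset.sum_sdiff hsub]
  have hg : ∑ x, g x = (∑ x ∈ Finset.univ \ {a, b}, g x) + (g a + g b) := by
    rw [← Finset.sum_pair hab, Finset.sum_sdiff hsub]
  have hteq : ∑ x ∈ Finset.univ \ {a, b}, f x = ∑ x ∈ Finset.univ \ {a, b}, g x := by
    refine Finset.sum_congr rfl fun x hx => ?_
    simp only [Finset.mem_sdiff, Finset.mem_insert, Finset.mem_singleton] at hx
    exact h x (fun h' => hx.2 (Or.inl h')) (fun h' => hx.2 (Or.inr h'))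
  omega

lemma tset_nonempty {α β : Type*} [Fintype α] [Fintype β] (t : ℕ) (A : Matrix α β ℕ) :
    {k : ℕ | ∃ B : Matrix α β ℕ,
      (∀ i j, B i j ≤ A i j) ∧ (∀ i, ∑ j, B i j ≤ t) ∧ (∀ j, ∑ i, B i j ≤ 1) ∧
      k = ∑ i, ∑ j, B i j}.Nonempty :=
  ⟨0, 0, fun i j => Nat.zero_le _, fun i => by simp, fun j => by simp, by simp⟩

lemma tset_bdd {α β : Type*} [Fintype α] [Fintype β] (t : ℕ) (A : Matrix α β ℕ) :
    BddAbove {k : ℕ | ∃ B : Matrix α β ℕ,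
      (∀ i j, B i j ≤ A i j) ∧ (∀ i, ∑ j, B i j ≤ t) ∧ (∀ j, ∑ i, B i j ≤ 1) ∧
      k = ∑ i, ∑ j, B i j} := by
  refine ⟨Fintype.card β, ?_⟩
  rintro k ⟨B, -, -, hcol, rfl⟩
  rw [show ∑ i, ∑ j, B i j = ∑ j, ∑ i, B i j from Finset.sum_comm]
  calc ∑ j, ∑ i, B i j ≤ ∑ _j : β, 1 := Finset.sum_le_sum fun j _ => hcol j
  _ = Fintype.card β := by simp

lemma tTermRank_key {m n : ℕ} (t : ℕ) (A A' : Matrix (Fin m) (Fin n) ℕ)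
    (i₁ i₂ : Fin m) (j₁ j₂ : Fin n) (hi : i₁ ≠ i₂) (hj : j₁ ≠ j₂)
    (h12 : A i₁ j₂ = 0) (h21 : A i₂ j₁ = 0)
    (e12 : A' i₁ j₂ = 1) (e21 : A' i₂ j₁ = 1)
    (eOther : ∀ i j, ¬((i = i₁ ∨ i = i₂) ∧ (j = j₁ ∨ j = j₂)) → A' i j = A i j) :
    tTermRank t A ≤ tTermRank t A' + 1 := by
  classical
  have hmem : tTermRank t A ∈ {k : ℕ | ∃ B : Matrix (Fin m) (Fin n) ℕ,
      (∀ i j, B i j ≤ A i j) ∧ (∀ i, ∑ j, B i j ≤ t) ∧ (∀ j, ∑ i, B i j ≤ 1) ∧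
      k = ∑ i, ∑ j, B i j} := Nat.sSup_mem (tset_nonempty t A) (tset_bdd t A)
  obtain ⟨B, hBA, hrow, hcol, hk⟩ := hmem
  set c := min (B i₁ j₁) (B i₂ j₂) with hc
  set B' : Matrix (Fin m) (Fin n) ℕ := fun i j =>
    if i = i₁ ∧ j = j₁ then 0
    else if i = i₂ ∧ j = j₂ then 0
    else if i = i₁ ∧ j = j₂ then c
    else if i = i₂ ∧ j = j₁ then c
    else B i j with hB'
  have hB12 : B i₁ j₂ = 0 := Nat.le_zero.mp (h12 ▸ hBA i₁ j₂)
  have hB21 : B i₂ j₁ = 0 := Nat.le_zero.mp (h21 ▸ hBA i₂ j₁)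
  have hb1le : B i₁ j₁ ≤ 1 :=
    le_trans (Finset.single_le_sum (f := fun i => B i j₁) (fun i _ => Nat.zero_le _)
      (Finset.mem_univ i₁)) (hcol j₁)
  have hb2le : B i₂ j₂ ≤ 1 :=
    le_trans (Finset.single_le_sum (f := fun i => B i j₂) (fun i _ => Nat.zero_le _)
      (Finset.mem_univ i₂)) (hcol j₂)
  have v11 : B' i₁ j₁ = 0 := by simp [hB']
  have v22 : B' i₂ j₂ = 0 := by simp [hB', hi.symm, hj.symm]
  have v12 : B' i₁ j₂ = c := by simp [hB', hi, hj, hi.symm, hj.symm]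
  have v21 : B' i₂ j₁ = c := by simp [hB', hi, hj, hi.symm, hj.symm]
  have voff : ∀ i j, ¬((i = i₁ ∨ i = i₂) ∧ (j = j₁ ∨ j = j₂)) → B' i j = B i j := by
    intro i j hij
    simp only [hB']
    rw [if_neg (by tauto), if_neg (by tauto), if_neg (by tauto), if_neg (by tauto)]
  have hc1 : c ≤ B i₁ j₁ := min_le_left _ _
  have hc2 : c ≤ B i₂ j₂ := min_le_right _ _
  have hcc : c = B i₁ j₁ ∨ c = B i₂ j₂ := min_choice _ _
  -- row equations
  have eqr1 : (∑ j, B' i₁ j) + B i₁ j₁ = (∑ j, B i₁ j) + c := by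
    have := sum_pair_congr' (B' i₁) (B i₁) j₁ j₂ hj
      (fun x h1 h2 => voff i₁ x (by tauto))
    rw [v11, v12, hB12] at this; omega
  have eqr2 : (∑ j, B' i₂ j) + B i₂ j₂ = (∑ j, B i₂ j) + c := by
    have := sum_pair_congr' (B' i₂) (B i₂) j₁ j₂ hj
      (fun x h1 h2 => voff i₂ x (by tauto))
    rw [v21, v22, hB21] at this; omega
  have eqc1 : (∑ i, B' i j₁) + B i₁ j₁ = (∑ i, B i j₁) + c := by
    have := sum_pair_congr' (fun i => B' i j₁) (fun i => B i j₁) i₁ i₂ hi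
      (fun x h1 h2 => voff x j₁ (by tauto))
    simp only [v11, v21, hB21] at this; omega
  have eqc2 : (∑ i, B' i j₂) + B i₂ j₂ = (∑ i, B i j₂) + c := by
    have := sum_pair_congr' (fun i => B' i j₂) (fun i => B i j₂) i₁ i₂ hi
      (fun x h1 h2 => voff x j₂ (by tauto))
    simp only [v12, v22, hB12] at this; omega
  have hrowB' : ∀ i, ∑ j, B' i j ≤ t := by
    intro i
    by_cases h1 : i = i₁
    · subst h1; have := hrow i; omega
    by_cases h2 : i = i₂
    · subst h2; have := hrow i; omega
    · have : ∑ j, B' i j = ∑ j, B i j :=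
        Finset.sum_congr rfl fun j _ => voff i j (by tauto)
      rw [this]; exact hrow i
  have hcolB' : ∀ j, ∑ i, B' i j ≤ 1 := by
    intro j
    by_cases h1 : j = j₁
    · subst h1; have := hcol j; omega
    by_cases h2 : j = j₂
    · subst h2; have := hcol j; omega
    · have : ∑ i, B' i j = ∑ i, B i j :=
        Finset.sum_congr rfl fun i _ => voff i j (by tauto)
      rw [this]; exact hcol j
  have hB'A' : ∀ i j, B' i j ≤ A' i j := by
    intro i j
    by_cases h1 : i = i₁ ∧ j = j₁
    · obtain ⟨rfl, rfl⟩ := h1; rw [v11]; exact Nat.zero_le _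
    by_cases h2 : i = i₂ ∧ j = j₂
    · obtain ⟨rfl, rfl⟩ := h2; rw [v22]; exact Nat.zero_le _
    by_cases h3 : i = i₁ ∧ j = j₂
    · obtain ⟨rfl, rfl⟩ := h3; rw [v12, e12]; omega
    by_cases h4 : i = i₂ ∧ j = j₁
    · obtain ⟨rfl, rfl⟩ := h4; rw [v21, e21]; omega
    · have hn : ¬((i = i₁ ∨ i = i₂) ∧ (j = j₁ ∨ j = j₂)) := by tauto
      rw [voff i j hn, eOther i j hn]; exact hBA i j
  have heq : (∑ i, ∑ j, B' i j) + ((∑ j, B i₁ j) + (∑ j, B i₂ j)) =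
      (∑ i, ∑ j, B i j) + ((∑ j, B' i₁ j) + (∑ j, B' i₂ j)) :=
    sum_pair_congr' (fun i => ∑ j, B' i j) (fun i => ∑ j, B i j) i₁ i₂ hi
      (fun x h1 h2 => Finset.sum_congr rfl fun j _ => voff x j (by tauto))
  have hle : (∑ i, ∑ j, B' i j) ≤ tTermRank t A' :=
    le_csSup (tset_bdd t A') ⟨B', hB'A', hrowB', hcolB', rfl⟩
  omega

/-- A single interchange changes the `t`-term rank by at most 1. -/
theorem t_term_rank_interchange (m n t : ℕ) (ht : 0 < t)
    (A A' : Matrix (Fin m) (Fin n) ℕ) (hA : ∀ i j, A i j ≤ 1)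
    (h : Interchange A A') :
    tTermRank t A - 1 ≤ tTermRank t A' ∧ tTermRank t A' ≤ tTermRank t A + 1 := by
  obtain ⟨i₁, i₂, j₁, j₂, hi, hj, hcase, e11, e12, e21, e22, eOther⟩ := h
  have eOther' : ∀ i j, ¬((i = i₁ ∨ i = i₂) ∧ (j = j₂ ∨ j = j₁)) → A i j = A' i j :=
    fun i j hn => (eOther i j (by tauto)).symm
  have eOther'' : ∀ i j, ¬((i = i₁ ∨ i = i₂) ∧ (j = j₁ ∨ j = j₂)) → A i j = A' i j :=
    fun i j hn => (eOther i j hn).symm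
  rcases hcase with ⟨a11, a12, a21, a22⟩ | ⟨a11, a12, a21, a22⟩
  · constructor
    · have := tTermRank_key t A A' i₁ i₂ j₁ j₂ hi hj a12 a21
        (by rw [e12, a11]) (by rw [e21, a22]) eOther
      omega
    · have := tTermRank_key t A' A i₁ i₂ j₂ j₁ hi hj.symm
        (by rw [e11, a12]) (by rw [e22, a21]) a11 a22 eOther'
      omega
  · constructor
    · have := tTermRank_key t A A' i₁ i₂ j₂ j₁ hi hj.symm a11 a22
        (by rw [e11, a12]) (by rw [e22, a21])
        (fun i j hn => eOther i j (by tauto))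
      omega
    · have := tTermRank_key t A' A i₁ i₂ j₁ j₂ hi hj
        (by rw [e12, a11]) (by rw [e21, a22]) a12 a21 eOther''
      omega
end

section
/- Let A be an m×n (0,1)-matrix, let t ≥ 2 be an integer, and let A' be obtained from A by a single interchange. If ρ_{t−1}(A') = ρ_{t−1}(A) + 1, then ρ_t(A) ≤ ρ_t(A') ≤ ρ_t(A) + 1; in particular, an interchange which increases the (t−1)-term rank cannot decrease the t-term rank. -/
open scoped BigOperators

section Aux

open Finset

variable {α β : Type*} [Fintype α] [Fintype β] [DecidableEq α] [DecidableEq β]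

/-- `B` is a valid `s`-term matching of `A`. -/
def IsTM (s : ℕ) (A B : Matrix α β ℕ) : Prop :=
  (∀ i j, B i j ≤ A i j) ∧ (∀ i, ∑ j, B i j ≤ s) ∧ (∀ j, ∑ i, B i j ≤ 1)

/-- `(R, C)` covers all nonzero entries of `A`. -/
def IsCover (A : Matrix α β ℕ) (R : Finset α) (C : Finset β) : Prop :=
  ∀ i j, A i j ≠ 0 → i ∈ R ∨ j ∈ C

lemma tTermRank_set_nonempty (s : ℕ) (A : Matrix α β ℕ) :
    {k : ℕ | ∃ B : Matrix α β ℕ,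
      (∀ i j, B i j ≤ A i j) ∧ (∀ i, ∑ j, B i j ≤ s) ∧ (∀ j, ∑ i, B i j ≤ 1) ∧
      k = ∑ i, ∑ j, B i j}.Nonempty := by
  refine ⟨0, (fun _ _ => 0 : Matrix α β ℕ), ?_, ?_, ?_, ?_⟩ <;> simp

lemma tTermRank_set_bddAbove (s : ℕ) (A : Matrix α β ℕ) :
    BddAbove {k : ℕ | ∃ B : Matrix α β ℕ,
      (∀ i j, B i j ≤ A i j) ∧ (∀ i, ∑ j, B i j ≤ s) ∧ (∀ j, ∑ i, B i j ≤ 1) ∧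
      k = ∑ i, ∑ j, B i j} := by
  refine ⟨Fintype.card β, ?_⟩
  rintro k ⟨B, _, _, h3, rfl⟩
  calc ∑ i, ∑ j, B i j = ∑ j, ∑ i, B i j := Finset.sum_comm
    _ ≤ ∑ _j : β, 1 := Finset.sum_le_sum (fun j _ => h3 j)
    _ = Fintype.card β := by simp

lemma le_tTermRank {s : ℕ} {A B : Matrix α β ℕ} (hB : IsTM s A B) :
    (∑ i, ∑ j, B i j) ≤ tTermRank s A := by
  apply le_csSup (tTermRank_set_bddAbove s A)
  exact ⟨B, hB.1, hB.2.1, hB.2.2, rfl⟩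

lemma tTermRank_le {s : ℕ} {A : Matrix α β ℕ} {u : ℕ}
    (h : ∀ B : Matrix α β ℕ, IsTM s A B → (∑ i, ∑ j, B i j) ≤ u) :
    tTermRank s A ≤ u := by
  apply csSup_le (tTermRank_set_nonempty s A)
  rintro k ⟨B, h1, h2, h3, rfl⟩
  exact h B ⟨h1, h2, h3⟩

/-- Weak duality: any matching is at most the cost of any cover. -/
lemma sum_le_cover {s : ℕ} {A B : Matrix α β ℕ} {R : Finset α} {C : Finset β}
    (hB : IsTM s A B) (hc : IsCover A R C) :
    (∑ i, ∑ j, B i j) ≤ s * R.card + C.card := by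
  obtain ⟨hBA, hrow, hcol⟩ := hB
  have hsplit : ∑ i ∈ (univ : Finset α) \ R, ∑ j, B i j + ∑ i ∈ R, ∑ j, B i j
      = ∑ i, ∑ j, B i j := Finset.sum_sdiff (subset_univ R)
  have h1 : ∑ i ∈ R, ∑ j, B i j ≤ s * R.card := by
    calc ∑ i ∈ R, ∑ j, B i j ≤ ∑ _i ∈ R, s := Finset.sum_le_sum (fun i _ => hrow i)
      _ = R.card * s := by simp [mul_comm]
      _ = s * R.card := mul_comm _ _
  have h2 : ∑ i ∈ (univ : Finset α) \ R, ∑ j, B i j ≤ C.card := by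
    have key : ∀ i ∈ (univ : Finset α) \ R, ∑ j, B i j = ∑ j ∈ C, B i j := by
      intro i hi
      rw [Finset.mem_sdiff] at hi
      refine (Finset.sum_subset (subset_univ C) ?_).symm
      intro j _ hj
      rcases Nat.eq_zero_or_pos (A i j) with h0 | h0
      · have := hBA i j; omega
      · rcases hc i j (by omega) with h | h
        · exact absurd h hi.2
        · exact absurd h hj
    calc ∑ i ∈ (univ : Finset α) \ R, ∑ j, B i j
        = ∑ i ∈ (univ : Finset α) \ R, ∑ j ∈ C, B i j := Finset.sum_congr rfl key
      _ ≤ ∑ i ∈ (univ : Finset α), ∑ j ∈ C, B i j :=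
          Finset.sum_le_sum_of_subset (Finset.sdiff_subset)
      _ = ∑ j ∈ C, ∑ i, B i j := Finset.sum_comm
      _ ≤ ∑ _j ∈ C, 1 := Finset.sum_le_sum (fun j _ => hcol j)
      _ = C.card := by simp
  omega

lemma tTermRank_le_cover {s : ℕ} {A : Matrix α β ℕ} {R : Finset α} {C : Finset β}
    (hc : IsCover A R C) : tTermRank s A ≤ s * R.card + C.card :=
  tTermRank_le (fun _ hB => sum_le_cover hB hc)

/-- Strong duality (König–Egerváry for capacitated matchings): there is a cover whose
cost is at most the `s`-term rank. -/
lemma exists_cover (s : ℕ) (A : Matrix α β ℕ) :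
    ∃ (R : Finset α) (C : Finset β), IsCover A R C ∧
      s * R.card + C.card ≤ tTermRank s A := by
  classical
  set N : Finset β → Finset α :=
    fun J => J.biUnion (fun j => univ.filter (fun i => A i j ≠ 0)) with hN
  set g : Finset β → ℕ := fun J => J.card - s * (N J).card with hg
  set d := (univ : Finset β).powerset.sup g with hd
  have hmax : ∀ J : Finset β, J.card ≤ s * (N J).card + d := by
    intro J
    have h1 : g J ≤ d := Finset.le_sup (Finset.mem_powerset.2 (subset_univ J))
    have h2 : g J = J.card - s * (N J).card := rfl
    omega
  obtain ⟨J, hkey⟩ : ∃ J : Finset β, s * (N J).card + d = J.card := by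
    obtain ⟨J₀, -, hJ₀⟩ := Finset.exists_mem_eq_sup ((univ : Finset β).powerset)
      ⟨∅, Finset.mem_powerset.2 (empty_subset _)⟩ g
    by_cases hc : s * (N J₀).card ≤ J₀.card
    · refine ⟨J₀, ?_⟩
      have h2 : g J₀ = J₀.card - s * (N J₀).card := rfl
      have h3 : d = g J₀ := hJ₀
      omega
    · refine ⟨∅, ?_⟩
      have h2 : g J₀ = J₀.card - s * (N J₀).card := rfl
      have h3 : d = g J₀ := hJ₀
      have hd0 : d = 0 := by omega
      have hN0 : N ∅ = ∅ := by simp [hN]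
      simp [hN0, hd0]
  -- Hall's theorem on the bipartite graph with `s` copies of each row plus `d` dummies
  set T : β → Finset ((α × Fin s) ⊕ Fin d) := fun j =>
    ((univ.filter (fun i => A i j ≠ 0)) ×ˢ (univ : Finset (Fin s))).image Sum.inl ∪
      (univ : Finset (Fin d)).image Sum.inr with hT
  have hall : ∀ K : Finset β, K.card ≤ (K.biUnion T).card := by
    intro K
    rcases K.eq_empty_or_nonempty with rfl | hK
    · simp
    · have hsub : ((N K) ×ˢ (univ : Finset (Fin s))).image Sum.inl ∪
          (univ : Finset (Fin d)).image Sum.inr ⊆ K.biUnion T := by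
        intro x hx
        rcases Finset.mem_union.1 hx with hx | hx
        · obtain ⟨⟨i, c⟩, hic, rfl⟩ := Finset.mem_image.1 hx
          rw [Finset.mem_product] at hic
          obtain ⟨j, hj, hij⟩ := Finset.mem_biUnion.1 hic.1
          exact Finset.mem_biUnion.2 ⟨j, hj, Finset.mem_union_left _
            (Finset.mem_image.2 ⟨(i, c), Finset.mem_product.2 ⟨hij, mem_univ _⟩, rfl⟩)⟩
        · obtain ⟨y, -, rfl⟩ := Finset.mem_image.1 hx
          obtain ⟨j, hj⟩ := hK
          exact Finset.mem_biUnion.2 ⟨j, hj, Finset.mem_union_right _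
            (Finset.mem_image.2 ⟨y, mem_univ _, rfl⟩)⟩
      have hdisj : Disjoint (((N K) ×ˢ (univ : Finset (Fin s))).image Sum.inl)
          ((univ : Finset (Fin d)).image Sum.inr) := by
        simp only [Finset.disjoint_left, Finset.mem_image]
        rintro x ⟨p, -, rfl⟩ ⟨y, -, h⟩
        exact Sum.inl_ne_inr h.symm
      have hcard := Finset.card_le_card hsub
      rw [Finset.card_union_of_disjoint hdisj,
        Finset.card_image_of_injective _ Sum.inl_injective,
        Finset.card_image_of_injective _ Sum.inr_injective,
        Finset.card_product] at hcard
      simp only [Finset.card_univ, Fintype.card_fin] at hcard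
      calc K.card ≤ s * (N K).card + d := hmax K
        _ = (N K).card * s + d := by ring
        _ ≤ (K.biUnion T).card := hcard
  obtain ⟨f, hfinj, hfT⟩ := (Finset.all_card_le_biUnion_card_iff_exists_injective T).1 hall
  -- the matching extracted from the Hall system of distinct representatives
  set B : Matrix α β ℕ := fun i j =>
    Sum.elim (fun p : α × Fin s => if p.1 = i then 1 else 0) (fun _ => 0) (f j) with hB
  have hfA : ∀ j (p : α × Fin s), f j = Sum.inl p → A p.1 j ≠ 0 := by
    intro j p hp
    have h := hfT j
    rw [hp, hT] at h
    rcases Finset.mem_union.1 h with h | h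
    · obtain ⟨q, hq, hql⟩ := Finset.mem_image.1 h
      obtain rfl : q = p := Sum.inl_injective hql
      rw [Finset.mem_product, Finset.mem_filter] at hq
      exact hq.1.2
    · obtain ⟨y, -, hy⟩ := Finset.mem_image.1 h
      exact absurd hy (Sum.inr_ne_inl)
  have hBA : ∀ i j, B i j ≤ A i j := by
    intro i j
    rcases hfj : f j with p | y
    · simp only [hB, hfj, Sum.elim_inl]
      by_cases hpi : p.1 = i
      · rw [if_pos hpi]
        have := hfA j p hfj
        rw [hpi] at this
        omega
      · rw [if_neg hpi]; exact Nat.zero_le _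
    · simp [hB, hfj]
  have hcol : ∀ j, ∑ i, B i j ≤ 1 := by
    intro j
    rcases hfj : f j with p | y
    · simp only [hB, hfj, Sum.elim_inl]
      rw [Finset.sum_ite_eq (univ : Finset α) p.1 (fun _ => 1)]
      simp
    · simp [hB, hfj]
  have hrow : ∀ i, ∑ j, B i j ≤ s := by
    intro i
    have hpt : ∀ j, B i j = if (∃ c : Fin s, f j = Sum.inl (i, c)) then 1 else 0 := by
      intro j
      rcases hfj : f j with p | y
      · simp only [hB, hfj, Sum.elim_inl]
        by_cases hpi : p.1 = i
        · rw [if_pos hpi, if_pos ⟨p.2, by cases p; simp_all⟩]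
        · rw [if_neg hpi, if_neg]
          rintro ⟨c, hc⟩
          cases Sum.inl_injective hc
          exact hpi rfl
      · simp only [hB, hfj, Sum.elim_inr]
        rw [if_neg]
        rintro ⟨c, hc⟩
        simp at hc
    calc ∑ j, B i j = ∑ j, if (∃ c : Fin s, f j = Sum.inl (i, c)) then 1 else 0 :=
          Finset.sum_congr rfl (fun j _ => hpt j)
      _ = (univ.filter (fun j => ∃ c : Fin s, f j = Sum.inl (i, c))).card :=
          (Finset.card_filter _ _).symm
      _ ≤ ((univ : Finset (Fin s)).image (fun c => (Sum.inl (i, c) : (α × Fin s) ⊕ Fin d))).card := by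
          apply Finset.card_le_card_of_injOn f
          · intro j hj
            rw [Finset.mem_coe, Finset.mem_filter] at hj
            obtain ⟨-, c, hc⟩ := hj
            exact Finset.mem_image.2 ⟨c, mem_univ _, hc.symm⟩
          · exact Function.Injective.injOn hfinj
      _ ≤ s := by
          rw [Finset.card_image_of_injective]
          · simp
          · intro a b hab
            simpa using hab
  -- total size of the matching
  have htot : (univ.filter (fun j => (f j).isLeft)).card ≤ ∑ i, ∑ j, B i j := by
    have hcol' : ∀ j, (f j).isLeft → ∑ i, B i j = 1 := by
      intro j hj
      rcases hfj : f j with p | y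
      · simp only [hB, hfj, Sum.elim_inl]
        rw [Finset.sum_ite_eq (univ : Finset α) p.1 (fun _ => 1)]
        simp
      · rw [hfj] at hj; simp at hj
    calc (univ.filter (fun j => (f j).isLeft)).card
        = ∑ j, if (f j).isLeft then 1 else 0 := Finset.card_filter _ _
      _ ≤ ∑ j, ∑ i, B i j := by
          apply Finset.sum_le_sum
          intro j _
          by_cases hj : (f j).isLeft
          · rw [if_pos hj, hcol' j hj]
          · rw [if_neg hj]; exact Nat.zero_le _
      _ = ∑ i, ∑ j, B i j := Finset.sum_comm
  have hright : (univ.filter (fun j => ¬ (f j).isLeft)).card ≤ d := by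
    have : (univ.filter (fun j => ¬ (f j).isLeft)).card ≤
        ((univ : Finset (Fin d)).image (Sum.inr : Fin d → (α × Fin s) ⊕ Fin d)).card := by
      apply Finset.card_le_card_of_injOn f
      · intro j hj
        rw [Finset.mem_coe, Finset.mem_filter] at hj
        rcases hfj : f j with p | y
        · rw [hfj] at hj; simp at hj
        · exact Finset.mem_image.2 ⟨y, mem_univ _, rfl⟩
      · exact Function.Injective.injOn hfinj
    rw [Finset.card_image_of_injective _ Sum.inr_injective] at this
    simpa using this
  have hsplitn : (univ.filter (fun j => (f j).isLeft)).card +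
      (univ.filter (fun j => ¬ (f j).isLeft)).card = Fintype.card β := by
    rw [Finset.card_filter_add_card_filter_not]
    exact Finset.card_univ
  -- assemble
  refine ⟨N J, univ \ J, ?_, ?_⟩
  · intro i j hij
    by_cases hj : j ∈ J
    · exact Or.inl (Finset.mem_biUnion.2 ⟨j, hj, Finset.mem_filter.2 ⟨mem_univ _, hij⟩⟩)
    · exact Or.inr (Finset.mem_sdiff.2 ⟨mem_univ _, hj⟩)
  · have hcardJ : J.card ≤ Fintype.card β := by
      simpa using Finset.card_le_card (subset_univ J)
    have hsd : (univ \ J).card = Fintype.card β - J.card := by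
      rw [Finset.card_sdiff_of_subset (subset_univ J)]
      simp
    have hfinal := le_tTermRank (A := A) (s := s) ⟨hBA, hrow, hcol⟩
    omega

end Aux

section Core

open Finset

/-- The cells of the `2×2` interchange block where `A'` vanishes force a classification of
the nonzero cells of `A'`. -/
lemma block_cases {m n : ℕ} {A A' : Matrix (Fin m) (Fin n) ℕ} {i₁ i₂ : Fin m} {j₁ j₂ : Fin n}
    (hA'p : A' i₁ j₁ = 0) (hA'q : A' i₂ j₂ = 0)
    (hoff : ∀ i j, ¬((i = i₁ ∨ i = i₂) ∧ (j = j₁ ∨ j = j₂)) → A' i j = A i j) :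
    ∀ i j, A' i j ≠ 0 → ((i = i₁ ∧ j = j₂) ∨ (i = i₂ ∧ j = j₁)) ∨ A' i j = A i j := by
  intro i j hij
  by_cases hb : (i = i₁ ∨ i = i₂) ∧ (j = j₁ ∨ j = j₂)
  · left
    obtain ⟨hi | hi, hj | hj⟩ := hb
    · subst hi; subst hj; exact absurd hA'p hij
    · exact Or.inl ⟨hi, hj⟩
    · exact Or.inr ⟨hi, hj⟩
    · subst hi; subst hj; exact absurd hA'q hij
  · exact Or.inr (hoff i j hb)

lemma prod_card_ineq (s : ℕ) {α : Type*} [DecidableEq α] (R R' : Finset α) :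
    (s + 1) * (R ∩ R').card + s * (R ∪ R').card ≤ (s + 1) * R.card + s * R'.card := by
  have h1 : (R ∩ R').card + (R ∪ R').card = R.card + R'.card :=
    Finset.card_inter_add_card_union R R'
  have h2 : (R ∩ R').card ≤ R.card := Finset.card_le_card Finset.inter_subset_left
  calc (s + 1) * (R ∩ R').card + s * (R ∪ R').card
      = s * ((R ∩ R').card + (R ∪ R').card) + (R ∩ R').card := by ring
    _ = s * (R.card + R'.card) + (R ∩ R').card := by rw [h1]
    _ ≤ s * (R.card + R'.card) + R.card := by omega
    _ = (s + 1) * R.card + s * R'.card := by ring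

/-- Core lemma: if the interchange increases the `(t-1)`-term rank, the `t`-term rank
does not decrease. -/
lemma core_le {m n t : ℕ} (ht : 2 ≤ t) (A A' : Matrix (Fin m) (Fin n) ℕ)
    (i₁ i₂ : Fin m) (j₁ j₂ : Fin n)
    (hp : A i₁ j₁ = 1) (hq : A i₂ j₂ = 1)
    (hp' : A' i₁ j₂ = 1) (hq' : A' i₂ j₁ = 1)
    (hAp' : A i₁ j₂ = 0) (hAq' : A i₂ j₁ = 0)
    (hA'p : A' i₁ j₁ = 0) (hA'q : A' i₂ j₂ = 0)
    (hoff : ∀ i j, ¬((i = i₁ ∨ i = i₂) ∧ (j = j₁ ∨ j = j₂)) → A' i j = A i j)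
    (hinc : tTermRank (t - 1) A' = tTermRank (t - 1) A + 1) :
    tTermRank t A ≤ tTermRank t A' := by
  classical
  by_contra hcon
  push_neg at hcon
  set s := t - 1 with hs
  have hst : s + 1 = t := by omega
  -- classification of nonzero entries
  have hblock' : ∀ i j, A' i j ≠ 0 → ((i = i₁ ∧ j = j₂) ∨ (i = i₂ ∧ j = j₁)) ∨ A' i j = A i j :=
    block_cases hA'p hA'q hoff
  have hblock : ∀ i j, A i j ≠ 0 → ((i = i₁ ∧ j = j₁) ∨ (i = i₂ ∧ j = j₂)) ∨ A i j = A' i j :=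
    block_cases (A := A') (A' := A) (j₁ := j₂) (j₂ := j₁) hAp' hAq'
      (fun i j hb => (hoff i j (by tauto)).symm)
  -- optimal covers
  obtain ⟨R, C, hRC, hRCcost⟩ := exists_cover t A'
  obtain ⟨R', C', hRC', hRC'cost⟩ := exists_cover s A
  -- (R, C) cannot cover both (i₁,j₁) and (i₂,j₂)
  have hmiss : ¬((i₁ ∈ R ∨ j₁ ∈ C) ∧ (i₂ ∈ R ∨ j₂ ∈ C)) := by
    rintro ⟨h1, h2⟩
    have hcovA : IsCover A R C := by
      intro i j hij
      rcases hblock i j hij with (⟨rfl, rfl⟩ | ⟨rfl, rfl⟩) | heq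
      · exact h1
      · exact h2
      · exact hRC i j (by omega)
    have h3 : tTermRank t A ≤ t * R.card + C.card := tTermRank_le_cover hcovA
    linarith
  have hmiss' : ¬((i₁ ∈ R' ∨ j₂ ∈ C') ∧ (i₂ ∈ R' ∨ j₁ ∈ C')) := by
    rintro ⟨h1, h2⟩
    have hcovA' : IsCover A' R' C' := by
      intro i j hij
      rcases hblock' i j hij with (⟨rfl, rfl⟩ | ⟨rfl, rfl⟩) | heq
      · exact h1
      · exact h2
      · exact hRC' i j (by omega)
    have h3 : tTermRank s A' ≤ s * R'.card + C'.card := tTermRank_le_cover hcovA'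
    rw [hinc] at h3
    linarith
  -- generic merged covers
  have mk1 : ∀ (C'' : Finset (Fin n)), C ∪ C' ⊆ C'' →
      (i₁ ∈ R ∩ R' ∨ j₁ ∈ C'') → (i₂ ∈ R ∩ R' ∨ j₂ ∈ C'') →
      tTermRank t A ≤ t * (R ∩ R').card + C''.card := by
    intro C'' hsub h1 h2
    apply tTermRank_le_cover
    intro i j hij
    rcases hblock i j hij with (⟨rfl, rfl⟩ | ⟨rfl, rfl⟩) | heq
    · exact h1
    · exact h2
    · rcases hRC i j (by omega) with hr | hc
      · rcases hRC' i j hij with hr' | hc'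
        · exact Or.inl (Finset.mem_inter.2 ⟨hr, hr'⟩)
        · exact Or.inr (hsub (Finset.mem_union_right _ hc'))
      · exact Or.inr (hsub (Finset.mem_union_left _ hc))
  have mk2 : ∀ (C'' : Finset (Fin n)), C ∩ C' ⊆ C'' →
      (i₁ ∈ R ∪ R' ∨ j₂ ∈ C'') → (i₂ ∈ R ∪ R' ∨ j₁ ∈ C'') →
      tTermRank s A' ≤ s * (R ∪ R').card + C''.card := by
    intro C'' hsub h1 h2
    apply tTermRank_le_cover
    intro i j hij
    rcases hblock' i j hij with (⟨rfl, rfl⟩ | ⟨rfl, rfl⟩) | heq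
    · exact h1
    · exact h2
    · rcases hRC i j hij with hr | hc
      · exact Or.inl (Finset.mem_union_left _ hr)
      · rcases hRC' i j (by omega) with hr' | hc'
        · exact Or.inl (Finset.mem_union_right _ hr')
        · exact Or.inr (hsub (Finset.mem_inter.2 ⟨hc, hc'⟩))
  have prodineq := prod_card_ineq s R R'
  rw [hst] at prodineq
  have cardC : (C ∪ C').card + (C ∩ C').card = C.card + C'.card := by
    rw [Finset.card_union_add_card_inter]
  -- case analysis on which corner each cover misses
  rcases not_and_or.1 hmiss with hσ | hσ <;> push_neg at hσ <;>
    rcases not_and_or.1 hmiss' with hτ | hτ <;> push_neg at hτ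
  · -- σ1 : i₁ ∉ R, j₁ ∉ C ; τ1 : i₁ ∉ R', j₂ ∉ C'
    have hj₂C : j₂ ∈ C := (hRC i₁ j₂ (by rw [hp']; exact one_ne_zero)).resolve_left hσ.1
    have hi₂R : i₂ ∈ R := (hRC i₂ j₁ (by rw [hq']; exact one_ne_zero)).resolve_right hσ.2
    have hj₁C' : j₁ ∈ C' := (hRC' i₁ j₁ (by rw [hp]; exact one_ne_zero)).resolve_left hτ.1
    have hi₂R' : i₂ ∈ R' := (hRC' i₂ j₂ (by rw [hq]; exact one_ne_zero)).resolve_right hτ.2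
    have b1 := mk1 (C ∪ C') (subset_refl _)
      (Or.inr (Finset.mem_union_right _ hj₁C'))
      (Or.inr (Finset.mem_union_left _ hj₂C))
    have b2 := mk2 (insert j₂ (C ∩ C')) (Finset.subset_insert _ _)
      (Or.inr (Finset.mem_insert_self _ _))
      (Or.inl (Finset.mem_union_left _ hi₂R))
    have hcard2 : (insert j₂ (C ∩ C')).card ≤ (C ∩ C').card + 1 := Finset.card_insert_le _ _
    have b2' : tTermRank s A' ≤ s * (R ∪ R').card + ((C ∩ C').card + 1) := by
      calc tTermRank s A' ≤ s * (R ∪ R').card + (insert j₂ (C ∩ C')).card := b2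
        _ ≤ s * (R ∪ R').card + ((C ∩ C').card + 1) := by omega
    rw [hinc] at b2'
    linarith
  · -- σ1 ; τ2 : i₂ ∉ R', j₁ ∉ C'
    have hj₂C : j₂ ∈ C := (hRC i₁ j₂ (by rw [hp']; exact one_ne_zero)).resolve_left hσ.1
    have hi₂R : i₂ ∈ R := (hRC i₂ j₁ (by rw [hq']; exact one_ne_zero)).resolve_right hσ.2
    have hi₁R' : i₁ ∈ R' := (hRC' i₁ j₁ (by rw [hp]; exact one_ne_zero)).resolve_right hτ.2
    have hj₂C' : j₂ ∈ C' := (hRC' i₂ j₂ (by rw [hq]; exact one_ne_zero)).resolve_left hτ.1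
    have b1 := mk1 (insert j₁ (C ∪ C')) (Finset.subset_insert _ _)
      (Or.inr (Finset.mem_insert_self _ _))
      (Or.inr (Finset.mem_insert_of_mem (Finset.mem_union_left _ hj₂C)))
    have b2 := mk2 (C ∩ C') (subset_refl _)
      (Or.inl (Finset.mem_union_right _ hi₁R'))
      (Or.inl (Finset.mem_union_left _ hi₂R))
    have hcard1 : (insert j₁ (C ∪ C')).card ≤ (C ∪ C').card + 1 := Finset.card_insert_le _ _
    have b1' : tTermRank t A ≤ t * (R ∩ R').card + ((C ∪ C').card + 1) := by
      calc tTermRank t A ≤ t * (R ∩ R').card + (insert j₁ (C ∪ C')).card := b1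
        _ ≤ t * (R ∩ R').card + ((C ∪ C').card + 1) := by omega
    rw [hinc] at b2
    linarith
  · -- σ2 : i₂ ∉ R, j₂ ∉ C ; τ1 : i₁ ∉ R', j₂ ∉ C'
    have hi₁R : i₁ ∈ R := (hRC i₁ j₂ (by rw [hp']; exact one_ne_zero)).resolve_right hσ.2
    have hj₁C : j₁ ∈ C := (hRC i₂ j₁ (by rw [hq']; exact one_ne_zero)).resolve_left hσ.1
    have hj₁C' : j₁ ∈ C' := (hRC' i₁ j₁ (by rw [hp]; exact one_ne_zero)).resolve_left hτ.1
    have hi₂R' : i₂ ∈ R' := (hRC' i₂ j₂ (by rw [hq]; exact one_ne_zero)).resolve_right hτ.2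
    have b1 := mk1 (insert j₂ (C ∪ C')) (Finset.subset_insert _ _)
      (Or.inr (Finset.mem_insert_of_mem (Finset.mem_union_right _ hj₁C')))
      (Or.inr (Finset.mem_insert_self _ _))
    have b2 := mk2 (C ∩ C') (subset_refl _)
      (Or.inl (Finset.mem_union_left _ hi₁R))
      (Or.inl (Finset.mem_union_right _ hi₂R'))
    have hcard1 : (insert j₂ (C ∪ C')).card ≤ (C ∪ C').card + 1 := Finset.card_insert_le _ _
    have b1' : tTermRank t A ≤ t * (R ∩ R').card + ((C ∪ C').card + 1) := by
      calc tTermRank t A ≤ t * (R ∩ R').card + (insert j₂ (C ∪ C')).card := b1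
        _ ≤ t * (R ∩ R').card + ((C ∪ C').card + 1) := by omega
    rw [hinc] at b2
    linarith
  · -- σ2 ; τ2 : i₂ ∉ R', j₁ ∉ C'
    have hi₁R : i₁ ∈ R := (hRC i₁ j₂ (by rw [hp']; exact one_ne_zero)).resolve_right hσ.2
    have hj₁C : j₁ ∈ C := (hRC i₂ j₁ (by rw [hq']; exact one_ne_zero)).resolve_left hσ.1
    have hi₁R' : i₁ ∈ R' := (hRC' i₁ j₁ (by rw [hp]; exact one_ne_zero)).resolve_right hτ.2
    have hj₂C' : j₂ ∈ C' := (hRC' i₂ j₂ (by rw [hq]; exact one_ne_zero)).resolve_left hτ.1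
    have b1 := mk1 (C ∪ C') (subset_refl _)
      (Or.inl (Finset.mem_inter.2 ⟨hi₁R, hi₁R'⟩))
      (Or.inr (Finset.mem_union_right _ hj₂C'))
    have b2 := mk2 (insert j₁ (C ∩ C')) (Finset.subset_insert _ _)
      (Or.inl (Finset.mem_union_left _ hi₁R))
      (Or.inr (Finset.mem_insert_self _ _))
    have hcard2 : (insert j₁ (C ∩ C')).card ≤ (C ∩ C').card + 1 := Finset.card_insert_le _ _
    have b2' : tTermRank s A' ≤ s * (R ∪ R').card + ((C ∩ C').card + 1) := by
      calc tTermRank s A' ≤ s * (R ∪ R').card + (insert j₁ (C ∩ C')).card := b2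
        _ ≤ s * (R ∪ R').card + ((C ∩ C').card + 1) := by omega
    rw [hinc] at b2'
    linarith

/-- Upper bound: an interchange increases the `t`-term rank by at most 1. -/
lemma core_upper {m n t : ℕ} (A A' : Matrix (Fin m) (Fin n) ℕ)
    (i₁ i₂ : Fin m) (j₁ j₂ : Fin n)
    (hp : A i₁ j₁ = 1)
    (hA'p : A' i₁ j₁ = 0) (hA'q : A' i₂ j₂ = 0)
    (hoff : ∀ i j, ¬((i = i₁ ∨ i = i₂) ∧ (j = j₁ ∨ j = j₂)) → A' i j = A i j) :
    tTermRank t A' ≤ tTermRank t A + 1 := by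
  classical
  have hblock' : ∀ i j, A' i j ≠ 0 → ((i = i₁ ∧ j = j₂) ∨ (i = i₂ ∧ j = j₁)) ∨ A' i j = A i j :=
    block_cases hA'p hA'q hoff
  obtain ⟨R, C, hRC, hcost⟩ := exists_cover t A
  rcases hRC i₁ j₁ (by rw [hp]; exact one_ne_zero) with hi | hj
  · -- i₁ ∈ R : cover A' by (R, insert j₁ C)
    have hcov : IsCover A' R (insert j₁ C) := by
      intro i j hij
      rcases hblock' i j hij with (⟨rfl, rfl⟩ | ⟨rfl, rfl⟩) | heq
      · exact Or.inl hi
      · exact Or.inr (Finset.mem_insert_self _ _)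
      · rcases hRC i j (by omega) with h | h
        · exact Or.inl h
        · exact Or.inr (Finset.mem_insert_of_mem h)
    have h1 : tTermRank t A' ≤ t * R.card + (insert j₁ C).card := tTermRank_le_cover hcov
    have h2 : (insert j₁ C).card ≤ C.card + 1 := Finset.card_insert_le _ _
    linarith
  · -- j₁ ∈ C : cover A' by (R, insert j₂ C)
    have hcov : IsCover A' R (insert j₂ C) := by
      intro i j hij
      rcases hblock' i j hij with (⟨rfl, rfl⟩ | ⟨rfl, rfl⟩) | heq
      · exact Or.inr (Finset.mem_insert_self _ _)
      · exact Or.inr (Finset.mem_insert_of_mem hj)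
      · rcases hRC i j (by omega) with h | h
        · exact Or.inl h
        · exact Or.inr (Finset.mem_insert_of_mem h)
    have h1 : tTermRank t A' ≤ t * R.card + (insert j₂ C).card := tTermRank_le_cover hcov
    have h2 : (insert j₂ C).card ≤ C.card + 1 := Finset.card_insert_le _ _
    linarith

end Core

/-- For `t ≥ 2`, a single interchange which increases the `(t−1)`-term rank cannot
decrease the `t`-term rank (and can increase it by at most 1). -/
theorem t_term_rank_interchange_increase (m n t : ℕ) (ht : 2 ≤ t)
    (A A' : Matrix (Fin m) (Fin n) ℕ) (hA : ∀ i j, A i j ≤ 1)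
    (h : Interchange A A')
    (hinc : tTermRank (t - 1) A' = tTermRank (t - 1) A + 1) :
    tTermRank t A ≤ tTermRank t A' ∧ tTermRank t A' ≤ tTermRank t A + 1 := by
  obtain ⟨i₁, i₂, j₁, j₂, hi, hj, hcase, e1, e2, e3, e4, hoff⟩ := h
  rcases hcase with ⟨c1, c2, c3, c4⟩ | ⟨c1, c2, c3, c4⟩
  · have hp' : A' i₁ j₂ = 1 := by rw [e2, c1]
    have hq' : A' i₂ j₁ = 1 := by rw [e3, c4]
    have hA'p : A' i₁ j₁ = 0 := by rw [e1, c2]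
    have hA'q : A' i₂ j₂ = 0 := by rw [e4, c3]
    exact ⟨core_le ht A A' i₁ i₂ j₁ j₂ c1 c4 hp' hq' c2 c3 hA'p hA'q hoff hinc,
      core_upper A A' i₁ i₂ j₁ j₂ c1 hA'p hA'q hoff⟩
  · have hp' : A' i₁ j₁ = 1 := by rw [e1, c2]
    have hq' : A' i₂ j₂ = 1 := by rw [e4, c3]
    have hA'p : A' i₁ j₂ = 0 := by rw [e2, c1]
    have hA'q : A' i₂ j₁ = 0 := by rw [e3, c4]
    have hoff' : ∀ i j, ¬((i = i₁ ∨ i = i₂) ∧ (j = j₂ ∨ j = j₁)) → A' i j = A i j :=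
      fun i j hb => hoff i j (by tauto)
    exact ⟨core_le ht A A' i₁ i₂ j₂ j₁ c2 c3 hp' hq' c1 c4 hA'p hA'q hoff' hinc,
      core_upper A A' i₁ i₂ j₂ j₁ c2 hA'p hA'q hoff'⟩
end

section
/- Let m, n, k, l be positive integers with km = ln, and let t be a positive integer. Then every m×n (0,1)-matrix A with exactly k 1s in each row and exactly l 1s in each column satisfies ρ_t(A) = min{tm, n}. -/
open scoped BigOperators

open Finset

lemma count_aux {α β : Type*} [Fintype α] [Fintype β] [DecidableEq β]
    (A : Matrix α β ℕ) (hA : ∀ i j, A i j ≤ 1) (k l : ℕ)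
    (hrow : ∀ i, ∑ j, A i j = k) (hcol : ∀ j, ∑ i, A i j = l)
    (R : Finset α) :
    k * R.card ≤ l * (R.biUnion (fun i => univ.filter (fun j => A i j = 1))).card := by
  set N := R.biUnion (fun i => univ.filter (fun j => A i j = 1)) with hN
  have h1 : ∀ i ∈ R, ∑ j ∈ N, A i j = k := by
    intro i hi
    rw [← hrow i]
    apply Finset.sum_subset (Finset.subset_univ N)
    intro j _ hj
    have h2 := hA i j
    by_contra h
    have : A i j = 1 := by omega
    exact hj (Finset.mem_biUnion.2 ⟨i, hi, Finset.mem_filter.2 ⟨Finset.mem_univ _, this⟩⟩)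
  calc k * R.card = ∑ i ∈ R, ∑ j ∈ N, A i j := by
        rw [Finset.sum_congr rfl h1, Finset.sum_const, smul_eq_mul, mul_comm]
    _ = ∑ j ∈ N, ∑ i ∈ R, A i j := Finset.sum_comm
    _ ≤ ∑ j ∈ N, ∑ i, A i j := by
        apply Finset.sum_le_sum
        intro j _
        exact Finset.sum_le_sum_of_subset (Finset.subset_univ R)
    _ = l * N.card := by
        rw [Finset.sum_congr rfl (fun j _ => hcol j), Finset.sum_const, smul_eq_mul, mul_comm]

/-- The `t`-term rank of every semiregular `m×n` (0,1)-matrix (with exactly `k` 1s in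
each row and exactly `l` 1s in each column, where `km = ln`) equals `min(tm, n)`. -/
theorem t_term_rank_semiregular (m n k l t : ℕ)
    (hm : 0 < m) (hn : 0 < n) (hk : 0 < k) (hl : 0 < l) (ht : 0 < t)
    (hkl : k * m = l * n)
    (A : Matrix (Fin m) (Fin n) ℕ) (hA : ∀ i j, A i j ≤ 1)
    (hrow : ∀ i, ∑ j, A i j = k) (hcol : ∀ j, ∑ i, A i j = l) :
    tTermRank t A = min (t * m) n := by
  classical
  rw [tTermRank]
  set S := {c : ℕ | ∃ B : Matrix (Fin m) (Fin n) ℕ,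
    (∀ i j, B i j ≤ A i j) ∧ (∀ i, ∑ j, B i j ≤ t) ∧ (∀ j, ∑ i, B i j ≤ 1) ∧
    c = ∑ i, ∑ j, B i j} with hS
  have hub : ∀ c ∈ S, c ≤ min (t * m) n := by
    rintro c ⟨B, hBA, hBr, hBc, rfl⟩
    refine le_min ?_ ?_
    · calc ∑ i, ∑ j, B i j ≤ ∑ _i : Fin m, t := Finset.sum_le_sum (fun i _ => hBr i)
        _ = t * m := by simp [mul_comm]
    · refine Finset.sum_comm.trans_le ?_
      calc ∑ j, ∑ i, B i j ≤ ∑ _j : Fin n, 1 := Finset.sum_le_sum (fun j _ => hBc j)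
        _ = n := by simp
  have hmem : min (t * m) n ∈ S := by
    rcases le_or_gt (t * m) n with h | h
    · -- case t*m ≤ n : choose t columns per row
      have hlt : l * t ≤ k := by
        have : l * t * m ≤ k * m := by
          calc l * t * m = l * (t * m) := by ring
            _ ≤ l * n := Nat.mul_le_mul_left l h
            _ = k * m := hkl.symm
        exact Nat.le_of_mul_le_mul_right this hm
      have hall : ∀ s : Finset (Fin m × Fin t),
          s.card ≤ (s.biUnion (fun p => univ.filter (fun j => A p.1 j = 1))).card := by
        intro s
        set R := s.image Prod.fst with hR
        have h1 : s.card ≤ t * R.card := by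
          have : s ⊆ R ×ˢ univ := by
            intro p hp
            exact Finset.mem_product.2 ⟨Finset.mem_image_of_mem _ hp, Finset.mem_univ _⟩
          calc s.card ≤ (R ×ˢ (univ : Finset (Fin t))).card := Finset.card_le_card this
            _ = R.card * t := by simp [Finset.card_product, mul_comm]
            _ = t * R.card := mul_comm _ _
        have h2 : s.biUnion (fun p => univ.filter (fun j => A p.1 j = 1))
            = R.biUnion (fun i => univ.filter (fun j => A i j = 1)) := by
          ext j
          simp only [Finset.mem_biUnion, hR, Finset.mem_image]
          constructor
          · rintro ⟨p, hp, hj⟩; exact ⟨p.1, ⟨p, hp, rfl⟩, hj⟩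
          · rintro ⟨i, ⟨p, hp, rfl⟩, hj⟩; exact ⟨p, hp, hj⟩
        rw [h2]
        have hcount := count_aux A hA k l hrow hcol R
        have : l * (t * R.card) ≤ l * (R.biUnion (fun i => univ.filter (fun j => A i j = 1))).card := by
          calc l * (t * R.card) = (l * t) * R.card := by ring
            _ ≤ k * R.card := Nat.mul_le_mul_right _ hlt
            _ ≤ _ := hcount
        exact h1.trans (Nat.le_of_mul_le_mul_left this hl)
      obtain ⟨f, hf, hfmem⟩ := (Finset.all_card_le_biUnion_card_iff_exists_injective
        (fun p : Fin m × Fin t => univ.filter (fun j => A p.1 j = 1))).1 hall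
      refine ⟨fun i j => (univ.filter (fun s : Fin t => f (i, s) = j)).card, ?_, ?_, ?_, ?_⟩
      · intro i j
        rcases Nat.eq_zero_or_pos ((univ.filter (fun s : Fin t => f (i, s) = j)).card) with h0 | h0
        · simp [h0]
        · obtain ⟨s, hs⟩ := Finset.card_pos.1 h0
          have hj := hfmem (i, s)
          rw [(Finset.mem_filter.1 hs).2] at hj
          have hA1 : A i j = 1 := (Finset.mem_filter.1 hj).2
          rw [hA1]
          rw [Finset.card_le_one]
          intro a ha b hb
          have ha' := (Finset.mem_filter.1 ha).2
          have hb' := (Finset.mem_filter.1 hb).2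
          have : f (i, a) = f (i, b) := by rw [ha', hb']
          exact congrArg Prod.snd (hf this)
      · intro i
        have := Finset.card_eq_sum_card_fiberwise
          (f := fun s : Fin t => f (i, s)) (s := univ) (t := univ) (fun x _ => Finset.mem_univ _)
        simp only [Finset.card_univ, Fintype.card_fin] at this
        exact le_of_eq this.symm
      · intro j
        have key : ∑ i, (univ.filter (fun s : Fin t => f (i, s) = j)).card
            = (univ.filter (fun p : Fin m × Fin t => f p = j)).card := by
          simp only [Finset.card_filter]
          rw [Fintype.sum_prod_type]
        rw [key, Finset.card_le_one]
        intro a ha b hb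
        exact hf ((Finset.mem_filter.1 ha).2.trans (Finset.mem_filter.1 hb).2.symm)
      · have : ∀ i, ∑ j, (univ.filter (fun s : Fin t => f (i, s) = j)).card = t := by
          intro i
          have := Finset.card_eq_sum_card_fiberwise
            (f := fun s : Fin t => f (i, s)) (s := univ) (t := univ) (fun x _ => Finset.mem_univ _)
          simp only [Finset.card_univ, Fintype.card_fin] at this
          exact this.symm
        rw [min_eq_left h]
        rw [Finset.sum_congr rfl (fun i _ => this i)]
        simp [mul_comm]
    · -- case n < t*m : one 1 in each column
      have hkt : k ≤ t * l := by
        have : k * m ≤ t * l * m := by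
          calc k * m = l * n := hkl
            _ ≤ l * (t * m) := Nat.mul_le_mul_left l h.le
            _ = t * l * m := by ring
        exact Nat.le_of_mul_le_mul_right this hm
      have hall : ∀ s : Finset (Fin n),
          s.card ≤ (s.biUnion (fun j => (univ.filter (fun i => A i j = 1)) ×ˢ (univ : Finset (Fin t)))).card := by
        intro s
        have h2 : s.biUnion (fun j => (univ.filter (fun i => A i j = 1)) ×ˢ (univ : Finset (Fin t)))
            = (s.biUnion (fun j => univ.filter (fun i => A i j = 1))) ×ˢ (univ : Finset (Fin t)) := by
          ext p
          simp only [Finset.mem_biUnion, Finset.mem_product]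
          tauto
        rw [h2, Finset.card_product, Finset.card_univ, Fintype.card_fin]
        have hcount := count_aux A.transpose (fun i j => hA j i) l k hcol hrow s
        have heq : s.biUnion (fun j => univ.filter (fun i => A.transpose j i = 1))
            = s.biUnion (fun j => univ.filter (fun i => A i j = 1)) := rfl
        rw [heq] at hcount
        set N := s.biUnion (fun j => univ.filter (fun i => A i j = 1))
        have : l * s.card ≤ l * (N.card * t) := by
          calc l * s.card ≤ k * N.card := hcount
            _ ≤ t * l * N.card := Nat.mul_le_mul_right _ hkt
            _ = l * (N.card * t) := by ring
        exact Nat.le_of_mul_le_mul_left this hl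
      obtain ⟨f, hf, hfmem⟩ := (Finset.all_card_le_biUnion_card_iff_exists_injective
        (fun j : Fin n => (univ.filter (fun i => A i j = 1)) ×ˢ (univ : Finset (Fin t)))).1 hall
      have hfA : ∀ j, A (f j).1 j = 1 := by
        intro j
        have := Finset.mem_product.1 (hfmem j)
        exact (Finset.mem_filter.1 this.1).2
      refine ⟨fun i j => if (f j).1 = i then 1 else 0, ?_, ?_, ?_, ?_⟩
      · intro i j
        by_cases hij : (f j).1 = i
        · simp [hij, hij ▸ hfA j]
        · simp [hij]
      · intro i
        have : ∑ j, (if (f j).1 = i then 1 else 0)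
            = (univ.filter (fun j : Fin n => (f j).1 = i)).card := by
          rw [Finset.card_filter]
        rw [this]
        have hinj : Set.InjOn (fun j => (f j).2) (univ.filter (fun j : Fin n => (f j).1 = i)) := by
          intro a ha b hb hab
          apply hf
          have ha' := (Finset.mem_filter.1 ha).2
          have hb' := (Finset.mem_filter.1 hb).2
          exact Prod.ext (ha'.trans hb'.symm) hab
        calc (univ.filter (fun j : Fin n => (f j).1 = i)).card
            ≤ (univ : Finset (Fin t)).card := by
              apply Finset.card_le_card_of_injOn _ (fun a _ => Finset.mem_univ _) hinj
          _ = t := by simp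
      · intro j
        simp
      · have hcolsum : ∀ j, ∑ i, (if (f j).1 = i then 1 else 0) = 1 := by
          intro j; simp
        rw [min_eq_right h.le, Finset.sum_comm]
        simp [hcolsum]
  have hbdd : BddAbove S := ⟨min (t * m) n, hub⟩
  exact le_antisymm (csSup_le ⟨_, hmem⟩ hub) (le_csSup hbdd hmem)
end

section
/- Let m, n, k, l be positive integers with km = ln and m ≤ n. Then every m×n (0,1)-matrix A with exactly k 1s in each row and exactly l 1s in each column has strength γ(A) = ⌈n/m⌉. -/
open scoped BigOperators

/-- The strength `γ(A)` of a (0,1)-matrix `A`: the smallest positive integer `t` such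
that `ρ_t(A)` equals the number of columns of `A`. -/
noncomputable def strength {α β : Type*} [Fintype α] [Fintype β] (A : Matrix α β ℕ) : ℕ :=
  sInf {t : ℕ | 0 < t ∧ tTermRank t A = Fintype.card β}

/-- Every semiregular `m×n` (0,1)-matrix with `m ≤ n` (exactly `k` 1s in each row and
exactly `l` 1s in each column, `km = ln`) has strength `⌈n/m⌉`. -/
theorem strength_semiregular (m n k l : ℕ)
    (hm : 0 < m) (hn : 0 < n) (hk : 0 < k) (hl : 0 < l)
    (hkl : k * m = l * n) (hmn : m ≤ n)
    (A : Matrix (Fin m) (Fin n) ℕ) (hA : ∀ i j, A i j ≤ 1)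
    (hrow : ∀ i, ∑ j, A i j = k) (hcol : ∀ j, ∑ i, A i j = l) :
    strength A = (n + m - 1) / m := by
  classical
  set T : ℕ := (n + m - 1) / m with hTdef
  -- basic facts about T
  have hdm := Nat.div_add_mod (n + m - 1) m
  have hmod := Nat.mod_lt (n + m - 1) hm
  have hdm' : m * T + (n + m - 1) % m = n + m - 1 := hdm
  have h5 : n ≤ m * T := by omega
  have hnTm : n ≤ T * m := by rw [mul_comm]; exact h5
  have hT1 : 0 < T := by
    rcases Nat.eq_zero_or_pos T with h | h
    · rw [h, mul_zero] at h5; omega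
    · exact h
  -- the defining set of tTermRank and its universal bound
  have hbound : ∀ t : ℕ, ∀ x ∈ {k : ℕ | ∃ B : Matrix (Fin m) (Fin n) ℕ,
      (∀ i j, B i j ≤ A i j) ∧ (∀ i, ∑ j, B i j ≤ t) ∧ (∀ j, ∑ i, B i j ≤ 1) ∧
      k = ∑ i, ∑ j, B i j}, x ≤ n := by
    rintro t x ⟨B, _, _, hBc, rfl⟩
    rw [show ∑ i, ∑ j, B i j = ∑ j, ∑ i, B i j from Finset.sum_comm]
    calc ∑ j, ∑ i, B i j ≤ ∑ _j : Fin n, 1 := Finset.sum_le_sum fun j _ => hBc j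
    _ = n := by simp
  have hzero : ∀ t : ℕ, (0 : ℕ) ∈ {k : ℕ | ∃ B : Matrix (Fin m) (Fin n) ℕ,
      (∀ i j, B i j ≤ A i j) ∧ (∀ i, ∑ j, B i j ≤ t) ∧ (∀ j, ∑ i, B i j ≤ 1) ∧
      k = ∑ i, ∑ j, B i j} := by
    intro t
    exact ⟨0, fun i j => Nat.zero_le _, by simp, by simp, by simp⟩
  -- Hall's theorem gives a selection for t = T
  have hHall : ∃ f : Fin n → Fin m × Fin T, Function.Injective f ∧
      ∀ j, f j ∈ (Finset.univ.filter fun i => A i j = 1) ×ˢ (Finset.univ : Finset (Fin T)) := by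
    rw [← Finset.all_card_le_biUnion_card_iff_exists_injective]
    intro S
    set N : Fin n → Finset (Fin m) := fun j => Finset.univ.filter fun i => A i j = 1 with hN
    set M : Finset (Fin m) := S.biUnion N with hM
    have hunion : S.biUnion (fun j => N j ×ˢ (Finset.univ : Finset (Fin T))) = M ×ˢ Finset.univ := by
      ext ⟨i, s⟩
      simp [hM, Finset.mem_biUnion, Finset.mem_product]
    rw [hunion, Finset.card_product, Finset.card_univ, Fintype.card_fin]
    -- counting argument : l * |S| ≤ k * |M|
    have hcount : l * S.card ≤ k * M.card := by
      have h1 : ∀ j ∈ S, ∑ i ∈ M, A i j = l := by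
        intro j hj
        rw [← hcol j]
        apply Finset.sum_subset (Finset.subset_univ M)
        intro i _ hiM
        by_contra hne
        have : A i j = 1 := by have := hA i j; omega
        exact hiM (Finset.mem_biUnion.2 ⟨j, hj, by simp [hN, this]⟩)
      have h2 : l * S.card = ∑ j ∈ S, ∑ i ∈ M, A i j := by
        rw [Finset.sum_congr rfl h1, Finset.sum_const, smul_eq_mul, mul_comm]
      rw [h2, Finset.sum_comm]
      calc ∑ i ∈ M, ∑ j ∈ S, A i j ≤ ∑ i ∈ M, ∑ j, A i j :=
            Finset.sum_le_sum fun i _ => Finset.sum_le_sum_of_subset (Finset.subset_univ S)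
        _ = ∑ i ∈ M, k := Finset.sum_congr rfl fun i _ => hrow i
        _ = k * M.card := by rw [Finset.sum_const, smul_eq_mul, mul_comm]
    -- deduce |S| ≤ |M| * T
    have h3 : m * S.card ≤ n * M.card := by
      have : l * (m * S.card) ≤ l * (n * M.card) := by
        calc l * (m * S.card) = m * (l * S.card) := by ring
          _ ≤ m * (k * M.card) := Nat.mul_le_mul_left m hcount
          _ = (k * m) * M.card := by ring
          _ = l * (n * M.card) := by rw [hkl]; ring
      exact Nat.le_of_mul_le_mul_left this hl
    have h4 : m * S.card ≤ m * (M.card * T) := by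
      calc m * S.card ≤ n * M.card := h3
        _ ≤ (T * m) * M.card := Nat.mul_le_mul_right _ hnTm
        _ = m * (M.card * T) := by ring
    exact Nat.le_of_mul_le_mul_left h4 hm
  obtain ⟨f, hfinj, hf⟩ := hHall
  have hfA : ∀ j, A (f j).1 j = 1 := by
    intro j
    have := hf j
    rw [Finset.mem_product] at this
    simpa using this.1
  -- the matrix B witnessing tTermRank T A = n
  set B : Matrix (Fin m) (Fin n) ℕ := fun i j => if (f j).1 = i then 1 else 0 with hBdef
  have hBcol : ∀ j, ∑ i, B i j = 1 := by
    intro j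
    simp [hBdef, Finset.sum_ite_eq]
  have hBle : ∀ i j, B i j ≤ A i j := by
    intro i j
    simp only [hBdef]
    split
    · next h => rw [← h]; rw [hfA j]
    · exact Nat.zero_le _
  have hBrow : ∀ i, ∑ j, B i j ≤ T := by
    intro i
    have : ∑ j, B i j = (Finset.univ.filter fun j => (f j).1 = i).card := by
      simp [hBdef, Finset.sum_ite_eq]
    rw [this]
    have : (Finset.univ.filter fun j => (f j).1 = i).card ≤
        (Finset.univ : Finset (Fin T)).card := by
      apply Finset.card_le_card_of_injOn (fun j => (f j).2)
      · intro j _; exact Finset.mem_univ _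
      · intro a ha b hb hab
        simp only [Finset.mem_coe, Finset.mem_filter] at ha hb
        apply hfinj
        have h2 : (f a).2 = (f b).2 := hab
        exact Prod.ext (ha.2.trans hb.2.symm) h2
    simpa using this
  have hBtot : ∑ i, ∑ j, B i j = n := by
    rw [Finset.sum_comm]
    simp [hBcol]
  -- tTermRank T A = n
  have hmemT : (n : ℕ) ∈ {k : ℕ | ∃ B : Matrix (Fin m) (Fin n) ℕ,
      (∀ i j, B i j ≤ A i j) ∧ (∀ i, ∑ j, B i j ≤ T) ∧ (∀ j, ∑ i, B i j ≤ 1) ∧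
      k = ∑ i, ∑ j, B i j} := ⟨B, hBle, hBrow, fun j => (hBcol j).le, hBtot.symm⟩
  have hrankT : tTermRank T A = n := by
    apply le_antisymm
    · exact csSup_le ⟨0, hzero T⟩ (hbound T)
    · exact le_csSup ⟨n, hbound T⟩ hmemT
  -- lower bound : any t in the strength set satisfies T ≤ t
  have hlow : ∀ t ∈ {t : ℕ | 0 < t ∧ tTermRank t A = Fintype.card (Fin n)}, T ≤ t := by
    rintro t ⟨ht0, hrt⟩
    rw [Fintype.card_fin] at hrt
    have hne : {k : ℕ | ∃ B : Matrix (Fin m) (Fin n) ℕ,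
        (∀ i j, B i j ≤ A i j) ∧ (∀ i, ∑ j, B i j ≤ t) ∧ (∀ j, ∑ i, B i j ≤ 1) ∧
        k = ∑ i, ∑ j, B i j}.Nonempty := ⟨0, hzero t⟩
    have hmem := Nat.sSup_mem hne ⟨n, hbound t⟩
    rw [show sSup {k : ℕ | ∃ B : Matrix (Fin m) (Fin n) ℕ,
        (∀ i j, B i j ≤ A i j) ∧ (∀ i, ∑ j, B i j ≤ t) ∧ (∀ j, ∑ i, B i j ≤ 1) ∧
        k = ∑ i, ∑ j, B i j} = tTermRank t A from rfl, hrt] at hmem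
    obtain ⟨C, _, hCr, _, hCn⟩ := hmem
    have hntm : n ≤ t * m := by
      calc n = ∑ i, ∑ j, C i j := hCn
        _ ≤ ∑ _i : Fin m, t := Finset.sum_le_sum fun i _ => hCr i
        _ = t * m := by simp [mul_comm]
    -- T = (n+m-1)/m ≤ t since n ≤ t*m
    have hntm' : n ≤ m * t := by rw [mul_comm] at hntm; exact hntm
    rw [hTdef, Nat.div_le_iff_le_mul_add_pred hm]
    omega
  -- conclude
  have hTmem : T ∈ {t : ℕ | 0 < t ∧ tTermRank t A = Fintype.card (Fin n)} := by
    refine ⟨hT1, ?_⟩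
    rw [Fintype.card_fin]
    exact hrankT
  exact le_antisymm (Nat.sInf_le hTmem) (le_csInf ⟨T, hTmem⟩ hlow)
end

section
/- Let R = (r_1,…,r_m) and S = (s_1,…,s_n) be nonnegative integral vectors, let t be a positive integer, let R' = (r'_1,…,r'_m) be an integral vector with r_i − t ≤ r'_i ≤ r_i for i = 1,…,m, and let S' = (s'_1,…,s'_n) be an integral vector with s_j − 1 ≤ s'_j ≤ s_j for j = 1,…,n. Then there exist matrices A ∈ A(R,S) and A' ∈ A(R',S') with A' ≤ A (entrywise) if and only if both classes A(R,S) and A(R',S') are nonempty. -/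
open scoped BigOperators

/-- `A ∈ 𝒜(R,S)` for integer vectors `R`, `S`: `A` is an `m×n` (0,1)-matrix whose row sum
vector is `R` and whose column sum vector is `S`. -/
def inClassZ {m n : ℕ} (R : Fin m → ℤ) (S : Fin n → ℤ)
    (A : Matrix (Fin m) (Fin n) ℕ) : Prop :=
  (∀ i j, A i j ≤ 1) ∧ (∀ i, (∑ j, (A i j : ℤ)) = R i) ∧ (∀ j, (∑ i, (A i j : ℤ)) = S j)

namespace AnsteeAux

/-- Switch: in rows `i` and `l`, exchange the entries in columns `j` and `k`. -/
def sw {m n : ℕ} (A : Matrix (Fin m) (Fin n) ℕ) (i l : Fin m) (j k : Fin n) :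
    Matrix (Fin m) (Fin n) ℕ :=
  fun p q => if p = i ∨ p = l then A p (Equiv.swap j k q) else A p q

lemma sw_apply_of_ne {m n : ℕ} {A : Matrix (Fin m) (Fin n) ℕ} {i l : Fin m} {j k : Fin n}
    {p : Fin m} (hp1 : p ≠ i) (hp2 : p ≠ l) (q : Fin n) : sw A i l j k p q = A p q := by
  simp [sw, hp1, hp2]

lemma sw_apply_mem {m n : ℕ} {A : Matrix (Fin m) (Fin n) ℕ} {i l : Fin m} {j k : Fin n}
    {p : Fin m} (hp : p = i ∨ p = l) (q : Fin n) :
    sw A i l j k p q = A p (Equiv.swap j k q) := by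
  simp [sw, hp]

lemma sw_inClass {m n : ℕ} {R : Fin m → ℤ} {S : Fin n → ℤ}
    {A : Matrix (Fin m) (Fin n) ℕ} (hA : inClassZ R S A) {i l : Fin m} {j k : Fin n}
    (hil : i ≠ l) (hsum : (A i j : ℤ) + A l j = A i k + A l k) :
    inClassZ R S (sw A i l j k) := by
  obtain ⟨h1, hr, hc⟩ := hA
  have split : ∀ f : Fin m → ℤ,
      ∑ p, f p = (∑ p ∈ Finset.univ \ ({i, l} : Finset (Fin m)), f p) + (f i + f l) := by
    intro f
    rw [← Finset.sum_pair hil (f := f), Finset.sum_sdiff (Finset.subset_univ _)]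
  refine ⟨?_, ?_, ?_⟩
  · intro p q
    by_cases hp : p = i ∨ p = l
    · rw [sw_apply_mem hp]; exact h1 _ _
    · push_neg at hp; rw [sw_apply_of_ne hp.1 hp.2]; exact h1 _ _
  · intro p
    by_cases hp : p = i ∨ p = l
    · calc (∑ q, (sw A i l j k p q : ℤ)) = ∑ q, (A p (Equiv.swap j k q) : ℤ) := by
            refine Finset.sum_congr rfl fun q _ => ?_
            rw [sw_apply_mem hp]
        _ = ∑ q, (A p q : ℤ) := Equiv.sum_comp (Equiv.swap j k) (fun q => (A p q : ℤ))
        _ = R p := hr p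
    · push_neg at hp
      calc (∑ q, (sw A i l j k p q : ℤ)) = ∑ q, (A p q : ℤ) := by
            refine Finset.sum_congr rfl fun q _ => ?_
            rw [sw_apply_of_ne hp.1 hp.2]
        _ = R p := hr p
  · intro q
    have hdiff : ∀ p ∈ Finset.univ \ ({i, l} : Finset (Fin m)),
        (sw A i l j k p q : ℤ) = (A p q : ℤ) := by
      intro p hp
      simp only [Finset.mem_sdiff, Finset.mem_insert, Finset.mem_singleton] at hp
      push_neg at hp
      rw [sw_apply_of_ne hp.2.1 hp.2.2]
    by_cases hqj : q = j
    · have hswap : Equiv.swap j k q = k := by rw [hqj]; exact Equiv.swap_apply_left j k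
      calc (∑ p, (sw A i l j k p q : ℤ))
          = (∑ p ∈ Finset.univ \ ({i, l} : Finset (Fin m)), (A p q : ℤ))
            + ((A i k : ℤ) + (A l k : ℤ)) := by
            rw [split]
            congr 1
            · exact Finset.sum_congr rfl hdiff
            · rw [sw_apply_mem (Or.inl rfl), sw_apply_mem (Or.inr rfl), hswap]
        _ = (∑ p ∈ Finset.univ \ ({i, l} : Finset (Fin m)), (A p q : ℤ))
            + ((A i q : ℤ) + (A l q : ℤ)) := by rw [hqj, ← hsum]
        _ = ∑ p, (A p q : ℤ) := (split _).symm
        _ = S q := hc q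
    · by_cases hqk : q = k
      · have hswap : Equiv.swap j k q = j := by rw [hqk]; exact Equiv.swap_apply_right j k
        calc (∑ p, (sw A i l j k p q : ℤ))
            = (∑ p ∈ Finset.univ \ ({i, l} : Finset (Fin m)), (A p q : ℤ))
              + ((A i j : ℤ) + (A l j : ℤ)) := by
              rw [split]
              congr 1
              · exact Finset.sum_congr rfl hdiff
              · rw [sw_apply_mem (Or.inl rfl), sw_apply_mem (Or.inr rfl), hswap]
          _ = (∑ p ∈ Finset.univ \ ({i, l} : Finset (Fin m)), (A p q : ℤ))
              + ((A i q : ℤ) + (A l q : ℤ)) := by rw [hqk, hsum]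
          _ = ∑ p, (A p q : ℤ) := (split _).symm
          _ = S q := hc q
      · calc (∑ p, (sw A i l j k p q : ℤ)) = ∑ p, (A p q : ℤ) := by
              refine Finset.sum_congr rfl fun p _ => ?_
              by_cases hp : p = i ∨ p = l
              · rw [sw_apply_mem hp, Equiv.swap_apply_of_ne_of_ne hqj hqk]
              · push_neg at hp; rw [sw_apply_of_ne hp.1 hp.2]
          _ = S q := hc q

/-- The number of positions where `A' > A`. -/
def Ncount {m n : ℕ} (A A' : Matrix (Fin m) (Fin n) ℕ) : ℕ :=
  (Finset.univ.filter (fun p : Fin m × Fin n => A p.1 p.2 < A' p.1 p.2)).card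

lemma Ncount_lt {m n : ℕ} {A A' B B' : Matrix (Fin m) (Fin n) ℕ} {i : Fin m} {j : Fin n}
    (hmem : A i j < A' i j)
    (h : ∀ p : Fin m × Fin n, B p.1 p.2 < B' p.1 p.2 →
      A p.1 p.2 < A' p.1 p.2 ∧ p ≠ (i, j)) :
    Ncount B B' < Ncount A A' := by
  have hij : (i, j) ∈ Finset.univ.filter (fun p : Fin m × Fin n => A p.1 p.2 < A' p.1 p.2) := by
    simp [hmem]
  have hsub : (Finset.univ.filter (fun p : Fin m × Fin n => B p.1 p.2 < B' p.1 p.2)) ⊆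
      (Finset.univ.filter (fun p : Fin m × Fin n => A p.1 p.2 < A' p.1 p.2)).erase (i, j) := by
    intro p hp
    simp only [Finset.mem_filter, Finset.mem_univ, true_and] at hp
    obtain ⟨h1, h2⟩ := h p hp
    simp [Finset.mem_erase, h1, h2]
  calc Ncount B B' ≤ _ := Finset.card_le_card hsub
    _ < Ncount A A' := Finset.card_erase_lt_of_mem hij

lemma exists_pos {α : Type*} [Fintype α] {f g : α → ℕ} (hf : ∀ a, f a ≤ 1) (hg : ∀ a, g a ≤ 1)
    (hsum : (∑ a, (g a : ℤ)) ≤ ∑ a, (f a : ℤ)) {a0 : α} (ha : f a0 < g a0) :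
    ∃ a, f a = 1 ∧ g a = 0 := by
  by_contra hc
  push_neg at hc
  have hle : ∀ a, (f a : ℤ) ≤ g a := by
    intro a
    have h1 := hf a
    have h2 := hg a
    have h3 := hc a
    omega
  have : (∑ a, (f a : ℤ)) < ∑ a, (g a : ℤ) :=
    Finset.sum_lt_sum (fun a _ => hle a) ⟨a0, Finset.mem_univ _, by exact_mod_cast ha⟩
  linarith

lemma exists_neg {α : Type*} [Fintype α] [DecidableEq α] {f g : α → ℕ} (hf : ∀ a, f a ≤ 1) (hg : ∀ a, g a ≤ 1)
    (hsum : (∑ a, (f a : ℤ)) ≤ (∑ a, (g a : ℤ)) + 1) {a1 a2 : α} (h12 : a1 ≠ a2)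
    (h1 : f a1 = 1) (h1' : g a1 = 0) (h2 : f a2 = 1) (h2' : g a2 = 0) :
    ∃ a, f a = 0 ∧ g a = 1 := by
  by_contra hc
  push_neg at hc
  have hle : ∀ a, (g a : ℤ) ≤ f a := by
    intro a
    have h1 := hf a
    have h2 := hg a
    have h3 := hc a
    omega
  have key : (2 : ℤ) ≤ ∑ a, ((f a : ℤ) - g a) := by
    have hpair : ∑ a ∈ ({a1, a2} : Finset α), ((f a : ℤ) - g a) = 2 := by
      rw [Finset.sum_pair h12, h1, h1', h2, h2']
      norm_num
    calc (2 : ℤ) = ∑ a ∈ ({a1, a2} : Finset α), ((f a : ℤ) - g a) := hpair.symm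
      _ ≤ ∑ a, ((f a : ℤ) - g a) := Finset.sum_le_sum_of_subset_of_nonneg
          (Finset.subset_univ _) (fun a _ _ => by have := hle a; omega)
  rw [Finset.sum_sub_distrib] at key
  linarith

section Descent

variable {m n : ℕ} {R R' : Fin m → ℤ} {S S' : Fin n → ℤ}

/-- The "good case": a switch reducing `Ncount`. -/
lemma goodstep {A A' : Matrix (Fin m) (Fin n) ℕ}
    (hA : inClassZ R S A) (hA' : inClassZ R' S' A')
    {i l : Fin m} {j k : Fin n} (hil : i ≠ l) (hjk : j ≠ k)
    (hAij : A i j = 0) (hA'ij : A' i j = 1)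
    (hAik : A i k = 1) (hA'ik : A' i k = 0)
    (hAlj : A l j = 1) (hA'lj : A' l j = 0)
    (hor : A l k = 0 ∨ A' l k = 1) :
    ∃ B B', inClassZ R S B ∧ inClassZ R' S' B' ∧ Ncount B B' < Ncount A A' := by
  have hle := hA.1
  have hle' := hA'.1
  have hmem : A i j < A' i j := by omega
  rcases hor with hAlk | hA'lk
  · refine ⟨sw A i l j k, A', sw_inClass hA hil (by rw [hAij, hAlj, hAik, hAlk]; norm_num),
      hA', Ncount_lt hmem ?_⟩
    rintro ⟨p1, p2⟩ hp
    dsimp only at hp ⊢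
    by_cases hp1i : p1 = i
    · subst hp1i
      by_cases hp2j : p2 = j
      · subst hp2j
        rw [sw_apply_mem (Or.inl rfl), Equiv.swap_apply_left, hAik, hA'ij] at hp
        omega
      · by_cases hp2k : p2 = k
        · subst hp2k
          rw [sw_apply_mem (Or.inl rfl), Equiv.swap_apply_right, hAij, hA'ik] at hp
          omega
        · rw [sw_apply_mem (Or.inl rfl), Equiv.swap_apply_of_ne_of_ne hp2j hp2k] at hp
          exact ⟨hp, by simp [Prod.ext_iff, hp2j]⟩
    · by_cases hp1l : p1 = l
      · subst hp1l
        by_cases hp2j : p2 = j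
        · subst hp2j
          rw [sw_apply_mem (Or.inr rfl), Equiv.swap_apply_left, hAlk, hA'lj] at hp
          omega
        · by_cases hp2k : p2 = k
          · subst hp2k
            rw [sw_apply_mem (Or.inr rfl), Equiv.swap_apply_right, hAlj] at hp
            have := hle' p1 p2
            omega
          · rw [sw_apply_mem (Or.inr rfl), Equiv.swap_apply_of_ne_of_ne hp2j hp2k] at hp
            exact ⟨hp, by simp only [ne_eq, Prod.mk.injEq, not_and]; intro h; exact absurd h.symm hil⟩
      · rw [sw_apply_of_ne hp1i hp1l] at hp
        exact ⟨hp, by simp [Prod.ext_iff, hp1i]⟩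
  · refine ⟨A, sw A' i l j k, hA,
      sw_inClass hA' hil (by rw [hA'ij, hA'lj, hA'ik, hA'lk]; norm_num),
      Ncount_lt hmem ?_⟩
    rintro ⟨p1, p2⟩ hp
    dsimp only at hp ⊢
    by_cases hp1i : p1 = i
    · subst hp1i
      by_cases hp2j : p2 = j
      · subst hp2j
        rw [sw_apply_mem (Or.inl rfl), Equiv.swap_apply_left, hA'ik] at hp
        omega
      · by_cases hp2k : p2 = k
        · subst hp2k
          rw [sw_apply_mem (Or.inl rfl), Equiv.swap_apply_right, hA'ij, hAik] at hp
          omega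
        · rw [sw_apply_mem (Or.inl rfl), Equiv.swap_apply_of_ne_of_ne hp2j hp2k] at hp
          exact ⟨hp, by simp [Prod.ext_iff, hp2j]⟩
    · by_cases hp1l : p1 = l
      · subst hp1l
        by_cases hp2j : p2 = j
        · subst hp2j
          rw [sw_apply_mem (Or.inr rfl), Equiv.swap_apply_left, hA'lk, hAlj] at hp
          omega
        · by_cases hp2k : p2 = k
          · subst hp2k
            rw [sw_apply_mem (Or.inr rfl), Equiv.swap_apply_right, hA'lj] at hp
            omega
          · rw [sw_apply_mem (Or.inr rfl), Equiv.swap_apply_of_ne_of_ne hp2j hp2k] at hp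
            exact ⟨hp, by simp only [ne_eq, Prod.mk.injEq, not_and]; intro h; exact absurd h.symm hil⟩
      · rw [sw_apply_of_ne hp1i hp1l] at hp
        exact ⟨hp, by simp [Prod.ext_iff, hp1i]⟩

/-- Main step: either we can reduce `Ncount`, or we can enlarge the witness set. -/
lemma mainstep (hRle : ∀ i, R' i ≤ R i) (hSle : ∀ j, S' j ≤ S j) (hS1 : ∀ j, S j - 1 ≤ S' j)
    {A A' : Matrix (Fin m) (Fin n) ℕ} (hA : inClassZ R S A) (hA' : inClassZ R' S' A')
    (F : Finset (Fin m)) (i : Fin m) (j : Fin n)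
    (h0 : A i j = 0) (h1 : A' i j = 1) (hF : ∀ l ∈ F, A l j = 1 ∧ A' l j = 0) :
    (∃ B B', inClassZ R S B ∧ inClassZ R' S' B' ∧ Ncount B B' < Ncount A A') ∨
    (∃ (i2 : Fin m) (k : Fin n), A i2 k = 0 ∧ A' i2 k = 1 ∧
      (∀ l ∈ insert i F, A l k = 1 ∧ A' l k = 0) ∧ i2 ∉ insert i F) := by
  have hle := hA.1
  have hle' := hA'.1
  -- find k in row i with A i k = 1, A' i k = 0
  obtain ⟨k, hk1, hk0⟩ := exists_pos (f := fun q => A i q) (g := fun q => A' i q)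
    (fun q => hle i q) (fun q => hle' i q)
    (by rw [hA.2.1 i, hA'.2.1 i]; exact hRle i) (a0 := j) (by show A i j < A' i j; omega)
  -- find l in column j with A l j = 1, A' l j = 0
  obtain ⟨l, hl1, hl0⟩ := exists_pos (f := fun p => A p j) (g := fun p => A' p j)
    (fun p => hle p j) (fun p => hle' p j)
    (by rw [hA.2.2 j, hA'.2.2 j]; exact hSle j) (a0 := i) (by show A i j < A' i j; omega)
  have hjk : j ≠ k := fun h => by rw [h] at h1; omega
  have hil : i ≠ l := fun h => by rw [h] at h0; omega
  by_cases hgood : ∃ (l' : Fin m) (k' : Fin n), (A l' j = 1 ∧ A' l' j = 0) ∧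
      (A i k' = 1 ∧ A' i k' = 0) ∧ (A l' k' = 0 ∨ A' l' k' = 1)
  · obtain ⟨l', k', ⟨hl'1, hl'0⟩, ⟨hk'1, hk'0⟩, hor⟩ := hgood
    have hjk' : j ≠ k' := fun h => by rw [h] at h1; omega
    have hil' : i ≠ l' := fun h => by rw [h] at h0; omega
    exact Or.inl (goodstep hA hA' hil' hjk' h0 h1 hk'1 hk'0 hl'1 hl'0 hor)
  · push_neg at hgood
    have hbad : ∀ l', A l' j = 1 → A' l' j = 0 → A l' k = 1 ∧ A' l' k = 0 := by
      intro l' ha hb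
      have := hgood l' k ⟨ha, hb⟩ ⟨hk1, hk0⟩
      have h1 := hle l' k
      have h2 := hle' l' k
      omega
    have hlk := hbad l hl1 hl0
    obtain ⟨i2, hi2a, hi2b⟩ := exists_neg (f := fun p => A p k) (g := fun p => A' p k)
      (fun p => hle p k) (fun p => hle' p k)
      (by rw [hA.2.2 k, hA'.2.2 k]; have := hS1 k; omega)
      hil hk1 hk0 hlk.1 hlk.2
    refine Or.inr ⟨i2, k, hi2a, hi2b, ?_, ?_⟩
    · intro l' hl'
      rcases Finset.mem_insert.mp hl' with h | h
      · subst h; exact ⟨hk1, hk0⟩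
      · exact hbad l' (hF l' h).1 (hF l' h).2
    · intro hmem
      rcases Finset.mem_insert.mp hmem with h | h
      · subst h; omega
      · have := hbad i2 (hF i2 h).1 (hF i2 h).2
        omega

lemma descent (hRle : ∀ i, R' i ≤ R i) (hSle : ∀ j, S' j ≤ S j) (hS1 : ∀ j, S j - 1 ≤ S' j)
    {A A' : Matrix (Fin m) (Fin n) ℕ} (hA : inClassZ R S A) (hA' : inClassZ R' S' A') :
    ∀ (c : ℕ) (F : Finset (Fin m)) (i : Fin m) (j : Fin n),
      A i j = 0 → A' i j = 1 → (∀ l ∈ F, A l j = 1 ∧ A' l j = 0) → i ∉ F →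
      m ≤ c + F.card →
      ∃ B B', inClassZ R S B ∧ inClassZ R' S' B' ∧ Ncount B B' < Ncount A A' := by
  intro c
  induction c with
  | zero =>
    intro F i j h0 h1 hF hiF hcard
    rcases mainstep hRle hSle hS1 hA hA' F i j h0 h1 hF with h | ⟨i2, k, _, _, hins, hi2⟩
    · exact h
    · exfalso
      have h1 : (insert i F).card = F.card + 1 := Finset.card_insert_of_notMem hiF
      have h2 : (insert i F).card ≤ m := by
        simpa using Finset.card_le_univ (insert i F)
      omega
  | succ c ih =>
    intro F i j h0 h1 hF hiF hcard
    rcases mainstep hRle hSle hS1 hA hA' F i j h0 h1 hF with h | ⟨i2, k, ha, hb, hins, hi2⟩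
    · exact h
    · refine ih (insert i F) i2 k ha hb hins hi2 ?_
      rw [Finset.card_insert_of_notMem hiF]
      omega

lemma le_of_Ncount_zero {A A' : Matrix (Fin m) (Fin n) ℕ} (h : Ncount A A' = 0) :
    ∀ i j, A' i j ≤ A i j := by
  intro i j
  by_contra hlt
  push_neg at hlt
  have hmem : (i, j) ∈ Finset.univ.filter
      (fun p : Fin m × Fin n => A p.1 p.2 < A' p.1 p.2) := by
    simp [hlt]
  have := Finset.card_pos.mpr ⟨(i, j), hmem⟩
  simp only [Ncount] at h
  omega

lemma main (hRle : ∀ i, R' i ≤ R i) (hSle : ∀ j, S' j ≤ S j) (hS1 : ∀ j, S j - 1 ≤ S' j) :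
    ∀ (c : ℕ) (A A' : Matrix (Fin m) (Fin n) ℕ),
      inClassZ R S A → inClassZ R' S' A' → Ncount A A' ≤ c →
      ∃ B B', inClassZ R S B ∧ inClassZ R' S' B' ∧ ∀ i j, B' i j ≤ B i j := by
  intro c
  induction c with
  | zero =>
    intro A A' hA hA' hc
    exact ⟨A, A', hA, hA', le_of_Ncount_zero (Nat.le_zero.mp hc)⟩
  | succ c ih =>
    intro A A' hA hA' hc
    rcases Nat.eq_zero_or_pos (Ncount A A') with h0 | hpos
    · exact ⟨A, A', hA, hA', le_of_Ncount_zero h0⟩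
    · obtain ⟨p, hp⟩ := Finset.card_pos.mp hpos
      simp only [Finset.mem_filter, Finset.mem_univ, true_and] at hp
      have h1 := hA.1 p.1 p.2
      have h2 := hA'.1 p.1 p.2
      obtain ⟨B, B', hB, hB', hN⟩ := descent hRle hSle hS1 hA hA' m ∅ p.1 p.2
        (by omega) (by omega) (by simp) (by simp) (by simp)
      exact ih B B' hB hB' (by omega)

end Descent

end AnsteeAux

/-- Anstee's theorem (corollary form): given nonnegative integral vectors `R`, `S`, a
positive integer `t`, and integral vectors `R'`, `S'` with `r_i − t ≤ r'_i ≤ r_i` and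
`s_j − 1 ≤ s'_j ≤ s_j`, there exist `A ∈ 𝒜(R,S)` and `A' ∈ 𝒜(R',S')` with `A' ≤ A`
(entrywise) iff both classes are nonempty. -/
theorem exists_nested_in_classes_iff (m n t : ℕ) (ht : 0 < t)
    (R : Fin m → ℤ) (S : Fin n → ℤ) (hR : ∀ i, 0 ≤ R i) (hS : ∀ j, 0 ≤ S j)
    (R' : Fin m → ℤ) (hR' : ∀ i, R i - t ≤ R' i ∧ R' i ≤ R i)
    (S' : Fin n → ℤ) (hS' : ∀ j, S j - 1 ≤ S' j ∧ S' j ≤ S j) :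
    (∃ (A A' : Matrix (Fin m) (Fin n) ℕ),
        inClassZ R S A ∧ inClassZ R' S' A' ∧ ∀ i j, A' i j ≤ A i j) ↔
      ((∃ A, inClassZ R S A) ∧ (∃ A', inClassZ R' S' A')) := by
  constructor
  · rintro ⟨A, A', hA, hA', _⟩
    exact ⟨⟨A, hA⟩, ⟨A', hA'⟩⟩
  · rintro ⟨⟨A, hA⟩, ⟨A', hA'⟩⟩
    obtain ⟨B, B', hB, hB', hle⟩ := AnsteeAux.main (fun i => (hR' i).2) (fun j => (hS' j).2)
      (fun j => (hS' j).1) (AnsteeAux.Ncount A A') A A' hA hA' le_rfl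
    exact ⟨B, B', hB, hB', hle⟩
end
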